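/- arXiv:2407.07867 — 2 statements merged into one kernel-verified Lean document; each statement's English description precedes it below -/
import Mathlib

section
/- Let V be a finite-dimensional complex vector space with complex structure operator I given by multiplication by i, and let η be an alternating ℂ-multilinear p-form on V with values in ℂ, regarded (together with its complex conjugate η̄) as a ℂ-valued alternating ℝ-multilinear p-form on the underlying real vector space of V. Then the 2p-form (−1)^{p(p−1)/2}·i^p·(η∧η̄) is weakly positive; that is, for all x₁,…,x_p ∈ V, the complex number (−1)^{p(p−1)/2}·i^p·(η∧η̄)(x₁, I x₁, x₂, I x₂, …, x_p, I x_p) is a nonnegative real number. -/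
open scoped BigOperators Classical

noncomputable section

namespace Stmt

variable {V : Type*}

/-- Wedge product of forms with values in a commutative ring, normalized by the
shuffle convention: `(α∧β)(v₁,…,v_{k+l}) = Σ over (k,l)-shuffles σ of
sgn(σ)·α(v_{σ(1)},…,v_{σ(k)})·β(v_{σ(k+1)},…,v_{σ(k+l)})`. -/
def wedge {R : Type*} [CommRing R] (k l : ℕ) (α : (Fin k → V) → R) (β : (Fin l → V) → R) :
    (Fin (k + l) → V) → R := fun v =>
  ∑ σ : Equiv.Perm (Fin (k + l)),
    if (StrictMono fun i : Fin k => σ (Fin.castAdd l i)) ∧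
        (StrictMono fun i : Fin l => σ (Fin.natAdd k i)) then
      ((Equiv.Perm.sign σ : ℤ) : R) *
        (α (fun i => v (σ (Fin.castAdd l i))) * β (fun i => v (σ (Fin.natAdd k i))))
    else 0

/-- The interleaved tuple `x₁, I x₁, x₂, I x₂, …, x_p, I x_p`, where `I` is
multiplication by `i`. -/
def interleave [SMul ℂ V] (p : ℕ) (x : Fin p → V) : Fin (p + p) → V := fun j =>
  if j.1 % 2 = 0 then x ⟨j.1 / 2, by have := j.2; omega⟩
  else Complex.I • x ⟨j.1 / 2, by have := j.2; omega⟩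

end Stmt

set_option maxHeartbeats 1000000

namespace Helper
open Equiv Finset

def bb (b : Bool) : ℕ := if b then 1 else 0

lemma bb_le (b : Bool) : bb b ≤ 1 := by cases b <;> simp [bb]

/-- the shuffle permutation determined by a choice of bits. -/
def shuf (p : ℕ) (ε : ℕ → Bool) : Equiv.Perm (Fin (p + p)) where
  toFun j := ⟨if j.1 < p then 2 * j.1 + bb (ε j.1) else 2 * (j.1 - p) + (1 - bb (ε (j.1 - p))),
    by have := j.2; have h1 := bb_le (ε j.1); have h2 := bb_le (ε (j.1 - p)); split <;> omega⟩
  invFun j := ⟨if j.1 % 2 = bb (ε (j.1 / 2)) then j.1 / 2 else p + j.1 / 2,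
    by have := j.2; split <;> omega⟩
  left_inv := by
    rintro ⟨j, hj⟩
    ext
    simp only
    by_cases hp : j < p
    · rw [if_pos hp]
      have hd : (2 * j + bb (ε j)) / 2 = j := by have := bb_le (ε j); omega
      have hm : (2 * j + bb (ε j)) % 2 = bb (ε j) := by have := bb_le (ε j); omega
      rw [hd, hm, if_pos rfl]
    · rw [if_neg hp]
      set k := j - p with hk
      have hd : (2 * k + (1 - bb (ε k))) / 2 = k := by have := bb_le (ε k); omega
      have hm : (2 * k + (1 - bb (ε k))) % 2 = 1 - bb (ε k) := by have := bb_le (ε k); omega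
      rw [hd, hm, if_neg (by cases h : ε k <;> simp [bb, h])]
      omega
  right_inv := by
    rintro ⟨j, hj⟩
    ext
    simp only
    by_cases hc : j % 2 = bb (ε (j / 2))
    · rw [if_pos hc, if_pos (by omega)]
      have := bb_le (ε (j/2)); omega
    · rw [if_neg hc, if_neg (by omega)]
      have h1 : p + j / 2 - p = j / 2 := by omega
      rw [h1]
      have := bb_le (ε (j/2)); cases h : ε (j/2) <;> simp [bb, h] at hc ⊢ <;> omega

lemma shuf_apply_lt (p : ℕ) (ε : ℕ → Bool) (j : Fin (p + p)) (h : j.1 < p) :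
    (shuf p ε j).1 = 2 * j.1 + bb (ε j.1) := by
  simp [shuf, h]

lemma shuf_apply_ge (p : ℕ) (ε : ℕ → Bool) (j : Fin (p + p)) (h : ¬ j.1 < p) :
    (shuf p ε j).1 = 2 * (j.1 - p) + (1 - bb (ε (j.1 - p))) := by
  simp [shuf, h]

lemma shuf_strictMono₁ (p : ℕ) (ε : ℕ → Bool) :
    StrictMono fun i : Fin p => shuf p ε (Fin.castAdd p i) := by
  intro a b hab
  have ha := shuf_apply_lt p ε (Fin.castAdd p a) (by simpa using a.2)
  have hb := shuf_apply_lt p ε (Fin.castAdd p b) (by simpa using b.2)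
  simp only [Fin.lt_def] at *
  simp only [Fin.coe_castAdd] at ha hb
  rw [ha, hb]
  have := bb_le (ε a.1); have := bb_le (ε b.1); omega

lemma shuf_strictMono₂ (p : ℕ) (ε : ℕ → Bool) :
    StrictMono fun i : Fin p => shuf p ε (Fin.natAdd p i) := by
  intro a b hab
  have ha := shuf_apply_ge p ε (Fin.natAdd p a) (by simp)
  have hb := shuf_apply_ge p ε (Fin.natAdd p b) (by simp)
  simp only [Fin.lt_def] at *
  simp only [Fin.coe_natAdd] at ha hb
  rw [ha, hb]
  have h1 : p + a.1 - p = a.1 := by omega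
  have h2 : p + b.1 - p = b.1 := by omega
  rw [h1] at ha ⊢; rw [h2]
  have := bb_le (ε a.1); have := bb_le (ε b.1); omega


lemma shuf_congr (p : ℕ) {ε ε' : ℕ → Bool} (h : ∀ j < p, ε j = ε' j) :
    shuf p ε = shuf p ε' := by
  ext j
  by_cases hp : j.1 < p
  · rw [shuf_apply_lt p ε j hp, shuf_apply_lt p ε' j hp, h j.1 hp]
  · rw [shuf_apply_ge p ε j hp, shuf_apply_ge p ε' j hp, h (j.1 - p) (by have := j.2; omega)]

def emb1 (p : ℕ) : Fin (p + p) ≃ {x : Fin ((p+1) + (p+1)) // x.1 < p + p} where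
  toFun x := ⟨⟨x.1, by have := x.2; omega⟩, x.2⟩
  invFun y := ⟨y.1.1, y.2⟩
  left_inv x := rfl
  right_inv y := rfl

def emb2 (p : ℕ) : Fin (p + 1) ≃ {x : Fin ((p+1) + (p+1)) // p ≤ x.1 ∧ x.1 ≤ p + p} where
  toFun k := ⟨⟨p + k.1, by have := k.2; omega⟩, ⟨by simp, by have := k.2; simp; omega⟩⟩
  invFun y := ⟨y.1.1 - p, by have := y.2; have := y.1.2; omega⟩
  left_inv k := by ext; simp
  right_inv y := by ext; have := y.2; simp; omega

lemma emb1_apply_val (p : ℕ) (y : Fin (p + p)) :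
    (((emb1 p) y : {x : Fin ((p+1) + (p+1)) // x.1 < p + p}) : Fin ((p+1) + (p+1))).1 = y.1 :=
  rfl

lemma shuf_zero_step (p : ℕ) :
    (shuf (p+1) (fun _ => false)) * ((finRotate (p+1)).extendDomain (emb2 p)) =
      (shuf p (fun _ => false)).extendDomain (emb1 p) := by
  ext j
  rcases j with ⟨j, hj⟩
  rw [Equiv.Perm.mul_apply]
  by_cases h1 : j < p
  · have hfix : (finRotate (p+1)).extendDomain (emb2 p) ⟨j, hj⟩ = ⟨j, hj⟩ :=
      Equiv.Perm.extendDomain_apply_not_subtype _ _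
        (show ¬ (p ≤ j ∧ j ≤ p + p) by omega)
    rw [hfix]
    have hR := Equiv.Perm.extendDomain_apply_subtype (shuf p (fun _ => false)) (emb1 p)
      (b := ⟨j, hj⟩) (show j < p + p by omega)
    rw [hR]
    have hs : ((emb1 p).symm ⟨⟨j, hj⟩, show j < p + p by omega⟩) = ⟨j, by omega⟩ := rfl
    rw [hs]
    have hL := shuf_apply_lt (p+1) (fun _ => false) ⟨j, hj⟩ (by simp; omega)
    have hr := shuf_apply_lt p (fun _ => false) ⟨j, by omega⟩ (by simpa using h1)
    simp only [emb1, Equiv.coe_fn_mk] at *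
    rw [hL]
    simp only [hr]
  · by_cases h2 : j ≤ p + p
    · have hlt : p + (j - p + 1) % (p + 1) < (p+1) + (p+1) := by
        have := Nat.mod_lt (j - p + 1) (show 0 < p + 1 by omega); omega
      have hrot : (finRotate (p+1)).extendDomain (emb2 p) ⟨j, hj⟩ =
          ⟨p + ((j - p + 1) % (p + 1)), hlt⟩ := by
        rw [Equiv.Perm.extendDomain_apply_subtype (finRotate (p+1)) (emb2 p)
          (b := ⟨j, hj⟩) (show p ≤ j ∧ j ≤ p + p from ⟨Nat.le_of_not_lt h1, h2⟩)]
        have hsym : ((emb2 p).symm ⟨⟨j, hj⟩, ⟨Nat.le_of_not_lt h1, h2⟩⟩) = ⟨j - p, by omega⟩ := by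
          simp [emb2]
        rw [hsym]
        simp [emb2, finRotate_succ_apply, Fin.add_def]
      rw [hrot]
      by_cases h3 : j < p + p
      · have hmod : (j - p + 1) % (p + 1) = j - p + 1 := Nat.mod_eq_of_lt (by omega)
        have hL := shuf_apply_ge (p+1) (fun _ => false) ⟨p + ((j - p + 1) % (p + 1)), hlt⟩
            (by show ¬ (p + (j - p + 1) % (p+1) < p + 1); rw [hmod]; omega)
        rw [hL]
        have hR := Equiv.Perm.extendDomain_apply_subtype (shuf p (fun _ => false)) (emb1 p)
          (b := ⟨j, hj⟩) (show j < p + p by omega)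
        rw [hR]
        have hs : ((emb1 p).symm ⟨⟨j, hj⟩, show j < p + p by omega⟩) = ⟨j, by omega⟩ := rfl
        rw [hs, emb1_apply_val]
        have hr := shuf_apply_ge p (fun _ => false) ⟨j, by omega⟩ (by simpa using h1)
        rw [hr]
        show 2 * ((p + (j - p + 1) % (p+1)) - (p+1)) + (1 - bb false)
            = 2 * (j - p) + (1 - bb false)
        rw [hmod]
        omega
      · have hj' : j = p + p := by omega
        have hmod : (j - p + 1) % (p + 1) = 0 := by
          have hh : j - p + 1 = p + 1 := by omega
          rw [hh, Nat.mod_self]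
        have hL := shuf_apply_lt (p+1) (fun _ => false) ⟨p + ((j - p + 1) % (p + 1)), hlt⟩
            (by show p + (j - p + 1) % (p+1) < p + 1; rw [hmod]; omega)
        rw [hL]
        have hR := Equiv.Perm.extendDomain_apply_not_subtype (shuf p (fun _ => false)) (emb1 p)
          (b := ⟨j, hj⟩) (show ¬ j < p + p by omega)
        rw [hR]
        show 2 * (p + (j - p + 1) % (p+1)) + bb false = j
        rw [hmod]
        simp [bb]
        omega
    · have hj' : j = p + p + 1 := by omega
      have hfix : (finRotate (p+1)).extendDomain (emb2 p) ⟨j, hj⟩ = ⟨j, hj⟩ :=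
        Equiv.Perm.extendDomain_apply_not_subtype _ _
          (show ¬ (p ≤ j ∧ j ≤ p + p) by omega)
      rw [hfix]
      have hL := shuf_apply_ge (p+1) (fun _ => false) ⟨j, hj⟩ (by simp; omega)
      have hR := Equiv.Perm.extendDomain_apply_not_subtype (shuf p (fun _ => false)) (emb1 p)
        (b := ⟨j, hj⟩) (show ¬ j < p + p by omega)
      rw [hR, hL]
      simp [bb]
      omega

lemma sign_shuf_zero (p : ℕ) :
    Equiv.Perm.sign (shuf p (fun _ => false)) = (-1) ^ (p * (p - 1) / 2) := by
  induction p with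
  | zero =>
    have h0 : (shuf 0 (fun _ => false)) = 1 := Equiv.ext fun j => Fin.elim0 j
    simp [h0]
  | succ p ih =>
    have h := congrArg Equiv.Perm.sign (shuf_zero_step p)
    rw [map_mul, Equiv.Perm.sign_extendDomain, Equiv.Perm.sign_extendDomain,
      sign_finRotate, ih] at h
    have h' : Equiv.Perm.sign (shuf (p+1) (fun _ => false)) =
        (-1 : ℤˣ) ^ (p * (p - 1) / 2) * ((-1 : ℤˣ) ^ p)⁻¹ := eq_mul_inv_of_mul_eq h
    rw [h', ← inv_pow, inv_neg, inv_one, ← pow_add]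
    congr 1
    have h2 : (p+1) * ((p+1) - 1) = p * (p - 1) + 2 * p := by
      cases p with
      | zero => rfl
      | succ q => simp only [Nat.succ_sub_one]; ring
    omega

lemma shuf_flip (p : ℕ) (ε : ℕ → Bool) (j : ℕ) (hj : j < p) :
    shuf p (Function.update ε j true) =
      shuf p (Function.update ε j false) *
        Equiv.swap (⟨j, by omega⟩ : Fin (p + p)) ⟨p + j, by omega⟩ := by
  ext k
  rcases k with ⟨k, hk⟩
  rw [Equiv.Perm.mul_apply]
  rcases eq_or_ne k j with rfl | hkj
  · have hsw : Equiv.swap (⟨k, by omega⟩ : Fin (p + p)) ⟨p + k, by omega⟩ ⟨k, hk⟩ =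
        ⟨p + k, by omega⟩ := by
      rw [show (⟨k, hk⟩ : Fin (p + p)) = ⟨k, by omega⟩ from rfl, Equiv.swap_apply_left]
    rw [hsw]
    have hL := shuf_apply_lt p (Function.update ε k true) ⟨k, hk⟩ hj
    have hR := shuf_apply_ge p (Function.update ε k false) ⟨p + k, by omega⟩ (by simp)
    rw [hL, hR]
    show 2 * k + bb (Function.update ε k true k) =
      2 * (p + k - p) + (1 - bb (Function.update ε k false (p + k - p)))
    rw [show p + k - p = k from by omega, Function.update_self, Function.update_self]
    simp [bb]
  · rcases eq_or_ne k (p + j) with rfl | hkpj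
    · have hsw : Equiv.swap (⟨j, by omega⟩ : Fin (p + p)) ⟨p + j, by omega⟩ ⟨p + j, hk⟩ =
          ⟨j, by omega⟩ := by
        rw [show (⟨p + j, hk⟩ : Fin (p + p)) = ⟨p + j, by omega⟩ from rfl,
          Equiv.swap_apply_right]
      rw [hsw]
      have hL := shuf_apply_ge p (Function.update ε j true) ⟨p + j, hk⟩ (by simp)
      have hR := shuf_apply_lt p (Function.update ε j false) ⟨j, by omega⟩ hj
      rw [hL, hR]
      show 2 * (p + j - p) + (1 - bb (Function.update ε j true (p + j - p))) =
        2 * j + bb (Function.update ε j false j)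
      rw [show p + j - p = j from by omega, Function.update_self, Function.update_self]
      simp [bb]
    · have hsw : Equiv.swap (⟨j, by omega⟩ : Fin (p + p)) ⟨p + j, by omega⟩ ⟨k, hk⟩ =
          ⟨k, hk⟩ := by
        apply Equiv.swap_apply_of_ne_of_ne <;> simp [Fin.ext_iff] <;> omega
      rw [hsw]
      by_cases hkp : k < p
      · rw [shuf_apply_lt p _ ⟨k, hk⟩ hkp, shuf_apply_lt p _ ⟨k, hk⟩ hkp,
          Function.update_of_ne hkj, Function.update_of_ne hkj]
      · rw [shuf_apply_ge p _ ⟨k, hk⟩ hkp, shuf_apply_ge p _ ⟨k, hk⟩ hkp,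
          Function.update_of_ne (show k - p ≠ j by omega),
          Function.update_of_ne (show k - p ≠ j by omega)]

lemma sign_shuf_aux (p : ℕ) : ∀ (n : ℕ) (ε : ℕ → Bool),
    ((range p).filter (fun j => ε j = true)).card = n →
    Equiv.Perm.sign (shuf p ε) = (-1) ^ (p * (p - 1) / 2) * (-1) ^ n := by
  intro n
  induction n with
  | zero =>
    intro ε hc
    have h0 : ∀ j < p, ε j = (fun _ => false) j := by
      intro j hjp
      by_contra hne
      have : j ∈ (range p).filter (fun j => ε j = true) := by
        simp only [mem_filter, mem_range]
        exact ⟨hjp, by revert hne; cases ε j <;> simp⟩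
      rw [Finset.card_eq_zero.mp hc] at this
      simp at this
    rw [shuf_congr p h0, sign_shuf_zero, pow_zero, mul_one]
  | succ n ih =>
    intro ε hc
    have hne : ((range p).filter (fun j => ε j = true)).Nonempty := by
      rw [← Finset.card_pos, hc]; omega
    obtain ⟨j, hjmem⟩ := hne
    simp only [mem_filter, mem_range] at hjmem
    obtain ⟨hjp, hjt⟩ := hjmem
    set ε' := Function.update ε j false with hε'
    have he : Function.update ε' j true = ε := by
      funext k
      rcases eq_or_ne k j with rfl | hk
      · simp [hε', hjt]
      · simp [hε', Function.update_of_ne hk]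
    have hrec : shuf p ε = shuf p ε' *
        Equiv.swap (⟨j, by omega⟩ : Fin (p + p)) ⟨p + j, by omega⟩ := by
      have h2 : Function.update ε' j false = ε' := by
        funext k
        rcases eq_or_ne k j with rfl | hk
        · simp [hε']
        · simp [Function.update_of_ne hk]
      rw [← he, shuf_flip p ε' j hjp, h2]
    have hcard : ((range p).filter (fun k => ε' k = true)).card = n := by
      have hset : (range p).filter (fun k => ε' k = true) =
          ((range p).filter (fun k => ε k = true)).erase j := by
        ext k
        simp only [mem_filter, mem_range, mem_erase]
        constructor
        · rintro ⟨hk1, hk2⟩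
          rcases eq_or_ne k j with rfl | hk
          · simp [hε'] at hk2
          · exact ⟨hk, hk1, by rwa [hε', Function.update_of_ne hk] at hk2⟩
        · rintro ⟨hk, hk1, hk2⟩
          exact ⟨hk1, by rwa [hε', Function.update_of_ne hk]⟩
      rw [hset, Finset.card_erase_of_mem (by simp [mem_filter, mem_range]; exact ⟨hjp, hjt⟩), hc]
      omega
    have hswap : Equiv.Perm.sign
        (Equiv.swap (⟨j, by omega⟩ : Fin (p + p)) ⟨p + j, by omega⟩) = -1 := by
      apply Equiv.Perm.sign_swap
      simp [Fin.ext_iff]; omega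
    rw [hrec, map_mul, ih ε' hcard, hswap, pow_succ, mul_assoc]

lemma sign_shuf (p : ℕ) (ε : ℕ → Bool) :
    Equiv.Perm.sign (shuf p ε) =
      (-1) ^ (p * (p - 1) / 2) * (-1) ^ ((range p).filter (fun j => ε j = true)).card :=
  sign_shuf_aux p _ ε rfl


variable {V : Type*} [AddCommGroup V] [Module ℂ V]

/-- extension of a boolean vector to ℕ -/
def ext' (p : ℕ) (ε : Fin p → Bool) : ℕ → Bool := fun n => if h : n < p then ε ⟨n, h⟩ else false

/-- the candidate nonzero shuffles -/
def E (p : ℕ) (ε : Fin p → Bool) : Equiv.Perm (Fin (p + p)) := shuf p (ext' p ε)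

lemma E_apply_cast (p : ℕ) (ε : Fin p → Bool) (i : Fin p) :
    (E p ε (Fin.castAdd p i)).1 = 2 * i.1 + bb (ε i) := by
  have h := shuf_apply_lt p (ext' p ε) (Fin.castAdd p i) (by simpa using i.2)
  show (shuf p (ext' p ε) (Fin.castAdd p i)).1 = _
  simpa [ext' , i.2, Fin.is_lt] using h

lemma E_apply_nat (p : ℕ) (ε : Fin p → Bool) (i : Fin p) :
    (E p ε (Fin.natAdd p i)).1 = 2 * i.1 + (1 - bb (ε i)) := by
  have h := shuf_apply_ge p (ext' p ε) (Fin.natAdd p i) (by simp)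
  simp only [Fin.coe_natAdd] at h
  show (shuf p (ext' p ε) (Fin.natAdd p i)).1 = _
  rw [h, show p + i.1 - p = i.1 from by omega]
  simp [ext', i.2, Fin.is_lt]

lemma E_inj (p : ℕ) : Function.Injective (E p) := by
  intro ε ε' h
  funext i
  have := congrArg (fun σ : Equiv.Perm (Fin (p+p)) => (σ (Fin.castAdd p i)).1) h
  simp only [E_apply_cast] at this
  have hb : bb (ε i) = bb (ε' i) := by omega
  cases hε : ε i <;> cases hε' : ε' i <;> simp [hε, hε', bb] at hb ⊢

lemma interleave_even (p : ℕ) (x : Fin p → V) (j : Fin (p + p)) (q : Fin p)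
    (h : j.1 = 2 * q.1) : Stmt.interleave p x j = x q := by
  unfold Stmt.interleave
  rw [if_pos (by omega)]
  exact congrArg x (Fin.ext (show j.1 / 2 = q.1 by omega))

lemma interleave_odd (p : ℕ) (x : Fin p → V) (j : Fin (p + p)) (q : Fin p)
    (h : j.1 = 2 * q.1 + 1) : Stmt.interleave p x j = Complex.I • x q := by
  unfold Stmt.interleave
  rw [if_neg (by omega)]
  exact congrArg (Complex.I • x ·) (Fin.ext (show j.1 / 2 = q.1 by omega))

lemma eta_zero (p : ℕ) (η : AlternatingMap ℂ V ℂ (Fin p)) (v : Fin p → V) (a b : Fin p)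
    (hab : a ≠ b) (h : v b = Complex.I • v a) : η v = 0 := by
  have h1 : η v = η (Function.update v b (Complex.I • v a)) := by
    rw [← h, Function.update_eq_self]
  have h2 : Function.update v b (v a) a = Function.update v b (v a) b := by
    rw [Function.update_of_ne hab, Function.update_self]
  rw [h1, AlternatingMap.map_update_smul, AlternatingMap.map_eq_zero_of_eq _ _ h2 hab,
    smul_zero]

lemma eta_scaled (p : ℕ) (η : AlternatingMap ℂ V ℂ (Fin p)) (x : Fin p → V) (c : Fin p → ℂ) :
    η (fun i => c i • x i) = (∏ i, c i) * η x := by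
  have h := η.toMultilinearMap.map_smul_univ c x
  simpa [smul_eq_mul] using h

lemma fin_strictMono_id {p : ℕ} (f : Fin p → Fin p) (hf : StrictMono f) : ∀ i, f i = i := by
  have hsurj : Function.Surjective f := Finite.surjective_of_injective hf.injective
  have hrange : Set.range f = Set.range (id : Fin p → Fin p) := by
    rw [Set.range_id, Set.range_eq_univ.mpr hsurj]
  have hid : f = id := (hf.range_inj strictMono_id).mp hrange
  intro i; rw [hid]; rfl

lemma vanish (p : ℕ) (η : AlternatingMap ℂ V ℂ (Fin p)) (x : Fin p → V)
    (σ : Equiv.Perm (Fin (p + p)))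
    (h1 : StrictMono fun i : Fin p => σ (Fin.castAdd p i))
    (h2 : StrictMono fun i : Fin p => σ (Fin.natAdd p i))
    (hnot : σ ∉ Finset.image (E p) Finset.univ) :
    η (fun i => Stmt.interleave p x (σ (Fin.castAdd p i))) = 0 ∨
      η (fun i => Stmt.interleave p x (σ (Fin.natAdd p i))) = 0 := by
  set f : Fin p → Fin (p + p) := fun i => σ (Fin.castAdd p i) with hfdef
  set g : Fin p → Fin (p + p) := fun i => σ (Fin.natAdd p i) with hgdef
  by_cases hcol1 : ∃ a b : Fin p, a ≠ b ∧ (f a).1 / 2 = (f b).1 / 2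
  · left
    obtain ⟨a, b, hab, hhalf⟩ := hcol1
    have hne : (f a).1 ≠ (f b).1 := fun hh => hab (h1.injective (Fin.ext hh))
    have hqlt : (f a).1 / 2 < p := by have := (f a).2; omega
    set q : Fin p := ⟨(f a).1 / 2, hqlt⟩ with hqdef
    have hq1 : q.1 = (f a).1 / 2 := rfl
    rcases (show (f a).1 = 2 * q.1 ∧ (f b).1 = 2 * q.1 + 1 ∨
        (f a).1 = 2 * q.1 + 1 ∧ (f b).1 = 2 * q.1 by omega) with ⟨ha, hb⟩ | ⟨ha, hb⟩
    · exact eta_zero p η _ a b hab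
        (by rw [interleave_odd p x (f b) q hb, interleave_even p x (f a) q ha])
    · exact eta_zero p η _ b a hab.symm
        (by rw [interleave_odd p x (f a) q ha, interleave_even p x (f b) q hb])
  · by_cases hcol2 : ∃ a b : Fin p, a ≠ b ∧ (g a).1 / 2 = (g b).1 / 2
    · right
      obtain ⟨a, b, hab, hhalf⟩ := hcol2
      have hne : (g a).1 ≠ (g b).1 := fun hh => hab (h2.injective (Fin.ext hh))
      have hqlt : (g a).1 / 2 < p := by have := (g a).2; omega
      set q : Fin p := ⟨(g a).1 / 2, hqlt⟩ with hqdef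
      have hq1 : q.1 = (g a).1 / 2 := rfl
      rcases (show (g a).1 = 2 * q.1 ∧ (g b).1 = 2 * q.1 + 1 ∨
          (g a).1 = 2 * q.1 + 1 ∧ (g b).1 = 2 * q.1 by omega) with ⟨ha, hb⟩ | ⟨ha, hb⟩
      · exact eta_zero p η _ a b hab
          (by rw [interleave_odd p x (g b) q hb, interleave_even p x (g a) q ha])
      · exact eta_zero p η _ b a hab.symm
          (by rw [interleave_odd p x (g a) q ha, interleave_even p x (g b) q hb])
    · exfalso
      apply hnot
      push_neg at hcol1 hcol2
      have hfhm : StrictMono (fun i => (⟨(f i).1 / 2, by have := (f i).2; omega⟩ : Fin p)) := by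
        intro a b hab
        have hlt : (f a).1 < (f b).1 := h1 hab
        have hle : (f a).1 / 2 ≤ (f b).1 / 2 := Nat.div_le_div_right (le_of_lt hlt)
        exact Fin.lt_def.mpr (lt_of_le_of_ne hle (hcol1 a b (ne_of_lt hab)))
      have hghm : StrictMono (fun i => (⟨(g i).1 / 2, by have := (g i).2; omega⟩ : Fin p)) := by
        intro a b hab
        have hlt : (g a).1 < (g b).1 := h2 hab
        have hle : (g a).1 / 2 ≤ (g b).1 / 2 := Nat.div_le_div_right (le_of_lt hlt)
        exact Fin.lt_def.mpr (lt_of_le_of_ne hle (hcol2 a b (ne_of_lt hab)))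
      have hfv : ∀ i : Fin p, (f i).1 / 2 = i.1 := by
        intro i
        exact congrArg Fin.val (fin_strictMono_id _ hfhm i)
      have hgv : ∀ i : Fin p, (g i).1 / 2 = i.1 := by
        intro i
        exact congrArg Fin.val (fin_strictMono_id _ hghm i)
      have hfg : ∀ i : Fin p, (f i).1 ≠ (g i).1 := by
        intro i hh
        have h3 : Fin.castAdd p i = Fin.natAdd p i := σ.injective (Fin.ext hh)
        have h4 := congrArg Fin.val h3
        simp only [Fin.coe_castAdd, Fin.coe_natAdd] at h4
        have := i.2
        omega
      refine Finset.mem_image.mpr ⟨fun i => decide ((f i).1 % 2 = 1), Finset.mem_univ _, ?_⟩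
      apply Equiv.ext
      intro k
      apply Fin.ext
      by_cases hk : k.1 < p
      · set i : Fin p := ⟨k.1, hk⟩ with hidef
        have hkeq : k = Fin.castAdd p i := Fin.ext rfl
        rw [hkeq, E_apply_cast]
        show 2 * i.1 + bb (decide ((f i).1 % 2 = 1)) = (f i).1
        have hv := hfv i
        rcases Nat.mod_two_eq_zero_or_one (f i).1 with hm | hm <;> rw [hm]
        · rw [show bb (decide ((0:ℕ) = 1)) = 0 from rfl]; omega
        · rw [show bb (decide ((1:ℕ) = 1)) = 1 from rfl]; omega
      · set i : Fin p := ⟨k.1 - p, by have := k.2; omega⟩ with hidef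
        have hkeq : k = Fin.natAdd p i := Fin.ext (by
          show k.1 = p + (k.1 - p)
          omega)
        rw [hkeq, E_apply_nat]
        show 2 * i.1 + (1 - bb (decide ((f i).1 % 2 = 1))) = (g i).1
        have hv := hgv i
        have hv' := hfv i
        have hne := hfg i
        rcases Nat.mod_two_eq_zero_or_one (f i).1 with hm | hm <;> rw [hm]
        · rw [show bb (decide ((0:ℕ) = 1)) = 0 from rfl]; omega
        · rw [show bb (decide ((1:ℕ) = 1)) = 1 from rfl]; omega

lemma card_bridge (p : ℕ) (ε : Fin p → Bool) :
    ((range p).filter (fun j => ext' p ε j = true)).card =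
      (Finset.univ.filter (fun i : Fin p => ε i = true)).card := by
  rw [show (range p).filter (fun j => ext' p ε j = true) =
      (Finset.univ.filter (fun i : Fin p => ε i = true)).image Fin.val from ?_]
  · exact Finset.card_image_of_injective _ Fin.val_injective
  · ext k
    simp only [Finset.mem_filter, Finset.mem_range, Finset.mem_image, Finset.mem_univ, true_and]
    constructor
    · rintro ⟨hk, hek⟩
      rw [ext', dif_pos hk] at hek
      exact ⟨⟨k, hk⟩, hek, rfl⟩
    · rintro ⟨⟨k', hk'⟩, hek, rfl⟩
      exact ⟨hk', by rw [ext', dif_pos hk']; exact hek⟩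

lemma term_value (p : ℕ) (η : AlternatingMap ℂ V ℂ (Fin p)) (x : Fin p → V)
    (ε : Fin p → Bool) :
    ((Equiv.Perm.sign (E p ε) : ℤ) : ℂ) *
      (η (fun i => Stmt.interleave p x (E p ε (Fin.castAdd p i))) *
        starRingEnd ℂ (η (fun i => Stmt.interleave p x (E p ε (Fin.natAdd p i))))) =
    (-1 : ℂ) ^ (p * (p - 1) / 2) * (-Complex.I) ^ p *
      (η x * starRingEnd ℂ (η x)) := by
  set m := p * (p - 1) / 2 with hm
  set t := (Finset.univ.filter (fun i : Fin p => ε i = true)).card with ht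
  have htp : t ≤ p := by
    rw [ht]
    calc (Finset.univ.filter (fun i : Fin p => ε i = true)).card
        ≤ (Finset.univ : Finset (Fin p)).card := Finset.card_filter_le _ _
      _ = p := by simp
  have hsign : ((Equiv.Perm.sign (E p ε) : ℤ) : ℂ) = (-1) ^ m * (-1) ^ t := by
    have h := sign_shuf p (ext' p ε)
    rw [card_bridge p ε] at h
    rw [show E p ε = shuf p (ext' p ε) from rfl, h]
    push_cast
    norm_cast
  have hα : (fun i => Stmt.interleave p x (E p ε (Fin.castAdd p i)))
      = fun i => (if ε i then Complex.I else 1) • x i := by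
    funext i
    by_cases hε : ε i
    · rw [if_pos hε]
      exact interleave_odd p x _ i (by rw [E_apply_cast]; simp [hε, bb])
    · rw [if_neg hε, one_smul]
      exact interleave_even p x _ i (by rw [E_apply_cast]; simp [hε, bb])
  have hβ : (fun i => Stmt.interleave p x (E p ε (Fin.natAdd p i)))
      = fun i => (if ε i then (1 : ℂ) else Complex.I) • x i := by
    funext i
    by_cases hε : ε i
    · rw [if_pos hε, one_smul]
      exact interleave_even p x _ i (by rw [E_apply_nat]; simp [hε, bb])
    · rw [if_neg hε]
      exact interleave_odd p x _ i (by rw [E_apply_nat]; simp [hε, bb])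
  rw [hα, hβ, eta_scaled, eta_scaled, hsign]
  have hprod1 : (∏ i, if ε i then Complex.I else 1) = Complex.I ^ t := by
    rw [Finset.prod_ite, Finset.prod_const, Finset.prod_const_one, mul_one]
  have hprod2 : (∏ i, if ε i then (1 : ℂ) else Complex.I) = Complex.I ^ (p - t) := by
    rw [Finset.prod_ite]
    simp only [Finset.prod_const, Finset.prod_const_one, one_pow, one_mul]
    congr 1
    have h := Finset.card_filter_add_card_filter_not
      (s := (Finset.univ : Finset (Fin p))) (p := fun i => ε i = true)
    simp only [Finset.card_univ, Fintype.card_fin] at h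
    omega
  rw [hprod1, hprod2, map_mul, map_pow, Complex.conj_I]
  have hkey : (-1 : ℂ) ^ t * (Complex.I ^ t * (-Complex.I) ^ (p - t)) = (-Complex.I) ^ p := by
    have hb : (-1 : ℂ) * Complex.I = -Complex.I := by ring
    rw [← mul_assoc, ← mul_pow, hb, ← pow_add, show t + (p - t) = p from by omega]
  calc (-1 : ℂ) ^ m * (-1) ^ t *
        (Complex.I ^ t * η x * ((-Complex.I) ^ (p - t) * starRingEnd ℂ (η x)))
      = (-1 : ℂ) ^ m * ((-1 : ℂ) ^ t * (Complex.I ^ t * (-Complex.I) ^ (p - t))) *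
          (η x * starRingEnd ℂ (η x)) := by ring
    _ = _ := by rw [hkey]

end Helper

theorem statement0' {V : Type*} [AddCommGroup V] [Module ℂ V] [FiniteDimensional ℂ V]
    (p : ℕ) (η : AlternatingMap ℂ V ℂ (Fin p)) (x : Fin p → V) :
    ∃ r : ℝ, 0 ≤ r ∧
      (-1 : ℂ) ^ (p * (p - 1) / 2) * Complex.I ^ p *
        Stmt.wedge p p (⇑η) (fun v => starRingEnd ℂ (η v)) (Stmt.interleave p x) = r := by
  classical
  open Helper Finset in
  refine ⟨2 ^ p * Complex.normSq (η x),
    mul_nonneg (by positivity) (Complex.normSq_nonneg _), ?_⟩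
  rw [show Stmt.wedge p p (⇑η) (fun v => starRingEnd ℂ (η v)) (Stmt.interleave p x) =
      ∑ σ : Equiv.Perm (Fin (p + p)),
        (if (StrictMono fun i : Fin p => σ (Fin.castAdd p i)) ∧
            (StrictMono fun i : Fin p => σ (Fin.natAdd p i)) then
          ((Equiv.Perm.sign σ : ℤ) : ℂ) *
            (η (fun i => Stmt.interleave p x (σ (Fin.castAdd p i))) *
              starRingEnd ℂ (η (fun i => Stmt.interleave p x (σ (Fin.natAdd p i)))))
        else 0) from rfl]
  set F : Equiv.Perm (Fin (p + p)) → ℂ := fun σ =>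
    if (StrictMono fun i : Fin p => σ (Fin.castAdd p i)) ∧
        (StrictMono fun i : Fin p => σ (Fin.natAdd p i)) then
      ((Equiv.Perm.sign σ : ℤ) : ℂ) *
        (η (fun i => Stmt.interleave p x (σ (Fin.castAdd p i))) *
          starRingEnd ℂ (η (fun i => Stmt.interleave p x (σ (Fin.natAdd p i)))))
    else 0 with hF
  have hz : ∀ σ ∈ (univ : Finset (Equiv.Perm (Fin (p + p)))),
      σ ∉ univ.image (Helper.E p) → F σ = 0 := by
    intro σ _ hσ
    by_cases hc : (StrictMono fun i : Fin p => σ (Fin.castAdd p i)) ∧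
        (StrictMono fun i : Fin p => σ (Fin.natAdd p i))
    · rcases Helper.vanish p η x σ hc.1 hc.2 hσ with h0 | h0
      · rw [hF]; simp only [if_pos hc, h0, zero_mul, mul_zero]
      · rw [hF]; simp only [if_pos hc, h0, map_zero, mul_zero]
    · rw [hF]; simp only [if_neg hc]
  rw [← Finset.sum_subset (Finset.subset_univ _) hz,
    Finset.sum_image (fun ε _ ε' _ h => Helper.E_inj p h)]
  have hterm : ∀ ε : Fin p → Bool, F (E p ε) =
      (-1 : ℂ) ^ (p * (p - 1) / 2) * (-Complex.I) ^ p *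
        (η x * starRingEnd ℂ (η x)) := by
    intro ε
    simp only [hF]
    have hcond : (StrictMono fun i : Fin p => (Helper.E p ε) (Fin.castAdd p i)) ∧
        (StrictMono fun i : Fin p => (Helper.E p ε) (Fin.natAdd p i)) :=
      ⟨Helper.shuf_strictMono₁ p (Helper.ext' p ε), Helper.shuf_strictMono₂ p (Helper.ext' p ε)⟩
    rw [if_pos hcond]
    exact Helper.term_value p η x ε
  rw [Finset.sum_congr rfl (fun ε _ => hterm ε), Finset.sum_const, Finset.card_univ]
  have hcard : Fintype.card (Fin p → Bool) = 2 ^ p := by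
    simp [Fintype.card_fun]
  rw [hcard, nsmul_eq_mul]
  have h1 : (Complex.I) ^ p * (-Complex.I) ^ p = 1 := by
    rw [← mul_pow, mul_neg, Complex.I_mul_I, neg_neg, one_pow]
  have h2 : (-1 : ℂ) ^ (p * (p - 1) / 2) * (-1) ^ (p * (p - 1) / 2) = 1 := by
    rw [← pow_add]
    exact Even.neg_one_pow ⟨p * (p - 1) / 2, rfl⟩
  rw [Complex.mul_conj]
  push_cast
  calc (-1 : ℂ) ^ (p * (p - 1) / 2) * Complex.I ^ p *
        ((2 : ℂ) ^ p * ((-1) ^ (p * (p - 1) / 2) * (-Complex.I) ^ p * ↑(Complex.normSq (η x))))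
      = ((-1 : ℂ) ^ (p * (p - 1) / 2) * (-1) ^ (p * (p - 1) / 2)) *
          (Complex.I ^ p * (-Complex.I) ^ p) * ((2 : ℂ) ^ p * ↑(Complex.normSq (η x))) := by
        ring
    _ = (2 : ℂ) ^ p * ↑(Complex.normSq (η x)) := by rw [h1, h2, one_mul, one_mul]

/-- for an alternating `ℂ`-multilinear `p`-form `η` on a finite-dimensional
complex vector space `V`, the `2p`-form `(−1)^{p(p−1)/2}·i^p·(η∧η̄)` is weakly positive. -/
theorem statement0 {V : Type*} [AddCommGroup V] [Module ℂ V] [FiniteDimensional ℂ V]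
    (p : ℕ) (η : AlternatingMap ℂ V ℂ (Fin p)) (x : Fin p → V) :
    ∃ r : ℝ, 0 ≤ r ∧
      (-1 : ℂ) ^ (p * (p - 1) / 2) * Complex.I ^ p *
        Stmt.wedge p p (⇑η) (fun v => starRingEnd ℂ (η v)) (Stmt.interleave p x) = r := by
  exact statement0' p η x
end
end

section
/- Let V be a real vector space of dimension 4n and let Ω be an alternating ℂ-bilinear 2-form on V ⊗_ℝ ℂ such that Ω^{n+1} = 0 (the (n+1)-st wedge power of Ω vanishes identically as an alternating (2n+2)-form) and the 4n-form Ωⁿ ∧ Ω̄ⁿ is nonzero, where Ω̄ is the form obtained by applying complex conjugation (induced by v⊗z ↦ v⊗z̄ on V ⊗_ℝ ℂ and conjugation on values). Then the kernel K = { v ∈ V ⊗_ℝ ℂ : v ⌟ Ω = 0 } is a complex subspace of dimension exactly 2n, K ∩ K̄ = 0, and V ⊗_ℝ ℂ = K ⊕ K̄, where K̄ is the image of K under complex conjugation. -/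
open scoped BigOperators Classical TensorProduct

noncomputable section

namespace Stmt

variable {V : Type*}

/-- The index of the `b`-th element of the `i`-th block of two. -/
def pidx (q : ℕ) (i : Fin q) (b : Fin 2) : Fin (q + q) :=
  ⟨2 * i.1 + b.1, by have := i.2; have := b.2; omega⟩

/-- The wedge product `ω₁ ∧ ω₂ ∧ … ∧ ω_q` of a family of `2`-forms, with the shuffle
convention; it is the sum over all permutations `σ` of `{1,…,2q}` increasing on each
of the `q` consecutive blocks of two of `sgn(σ)·∏ᵢ ωᵢ(v_{σ(2i−1)}, v_{σ(2i)})`. -/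
def wedgeMany {R : Type*} [CommRing R] (q : ℕ) (ω : Fin q → ((Fin 2 → V) → R)) :
    (Fin (q + q) → V) → R := fun v =>
  ∑ σ : Equiv.Perm (Fin (q + q)),
    if ∀ i : Fin q, σ (pidx q i 0) < σ (pidx q i 1) then
      ((Equiv.Perm.sign σ : ℤ) : R) * ∏ i : Fin q, ω i (fun b => v (σ (pidx q i b)))
    else 0

/-- A `ℂ`-valued `k`-form on a complex vector space has type `(p,q)` (with `p+q=k`) iff it
transforms by `z^p·z̄^q` under scaling of all arguments by `z ∈ ℂ` (the scaling
characterization of the type decomposition). -/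
def IsTypePQ [SMul ℂ V] (p q : ℕ) {k : ℕ} (α : (Fin k → V) → ℂ) : Prop :=
  ∀ (z : ℂ) (x : Fin k → V),
    α (fun i => z • x i) = z ^ p * (starRingEnd ℂ z) ^ q * α x

end Stmt

namespace S7

def flipFun (q : ℕ) (ε : Fin q → Bool) (j : Fin (q + q)) : Fin (q + q) :=
  ⟨if ε ⟨j.1 / 2, by have := j.2; omega⟩ then (if j.1 % 2 = 0 then j.1 + 1 else j.1 - 1)
      else j.1, by
    have := j.2
    split
    · split <;> omega
    · omega⟩

lemma flipFun_val (q : ℕ) (ε : Fin q → Bool) (j : Fin (q + q)) :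
    (flipFun q ε j).1 =
      if ε ⟨j.1 / 2, by have := j.2; omega⟩ then (if j.1 % 2 = 0 then j.1 + 1 else j.1 - 1)
      else j.1 := rfl

lemma flipFun_div (q : ℕ) (ε : Fin q → Bool) (j : Fin (q + q)) :
    (flipFun q ε j).1 / 2 = j.1 / 2 := by
  rw [flipFun_val]
  split
  · split <;> omega
  · rfl

lemma pidx_val (q : ℕ) (i : Fin q) (b : Fin 2) : (Stmt.pidx q i b).1 = 2 * i.1 + b.1 := rfl

lemma eq_pidx (q : ℕ) (j : Fin (q + q)) :
    j = Stmt.pidx q ⟨j.1 / 2, by have := j.2; omega⟩ ⟨j.1 % 2, by omega⟩ := by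
  ext; simp only [pidx_val, Fin.val_mk]; omega

lemma flipFun_pidx0 (q : ℕ) (ε : Fin q → Bool) (i : Fin q) :
    flipFun q ε (Stmt.pidx q i 0) = if ε i then Stmt.pidx q i 1 else Stmt.pidx q i 0 := by
  have h2 : (⟨(Stmt.pidx q i 0).1 / 2, by have := (Stmt.pidx q i 0).2; omega⟩ : Fin q) = i := by
    ext; simp only [pidx_val, Fin.val_mk]; omega
  ext
  rw [flipFun_val, h2]
  split <;> rename_i h <;> simp [h, pidx_val]

lemma flipFun_pidx1 (q : ℕ) (ε : Fin q → Bool) (i : Fin q) :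
    flipFun q ε (Stmt.pidx q i 1) = if ε i then Stmt.pidx q i 0 else Stmt.pidx q i 1 := by
  have h2 : (⟨(Stmt.pidx q i 1).1 / 2, by have := (Stmt.pidx q i 1).2; omega⟩ : Fin q) = i := by
    ext; simp only [pidx_val, Fin.val_mk]; omega
  ext
  rw [flipFun_val, h2]
  split <;> rename_i h <;> simp [h, pidx_val] <;> omega

lemma flipFun_invol (q : ℕ) (ε : Fin q → Bool) : Function.Involutive (flipFun q ε) := by
  have key : ∀ (i : Fin q) (b : Fin 2),
      flipFun q ε (flipFun q ε (Stmt.pidx q i b)) = Stmt.pidx q i b := by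
    intro i b
    fin_cases b
    · show flipFun q ε (flipFun q ε (Stmt.pidx q i 0)) = Stmt.pidx q i 0
      rw [flipFun_pidx0]
      by_cases h : ε i
      · simp [h, flipFun_pidx1]
      · simp [h, flipFun_pidx0]
    · show flipFun q ε (flipFun q ε (Stmt.pidx q i 1)) = Stmt.pidx q i 1
      rw [flipFun_pidx1]
      by_cases h : ε i
      · simp [h, flipFun_pidx0]
      · simp [h, flipFun_pidx1]
  intro j
  rw [eq_pidx q j]
  apply key

def flipPerm (q : ℕ) (ε : Fin q → Bool) : Equiv.Perm (Fin (q + q)) :=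
  (flipFun_invol q ε).toPerm

lemma flipPerm_apply (q : ℕ) (ε : Fin q → Bool) (j : Fin (q + q)) :
    flipPerm q ε j = flipFun q ε j := rfl

lemma flipPerm_mul_self (q : ℕ) (ε : Fin q → Bool) :
    flipPerm q ε * flipPerm q ε = 1 := by
  ext j
  simp [flipPerm_apply, flipFun_invol q ε j]
lemma pidx_ne (q : ℕ) (i : Fin q) : Stmt.pidx q i 0 ≠ Stmt.pidx q i 1 := by
  simp [Fin.ext_iff, pidx_val]

lemma sign_flipPerm_aux (q : ℕ) (s : Finset (Fin q)) :
    ∀ ε : Fin q → Bool, (∀ i, ε i = true ↔ i ∈ s) →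
      Equiv.Perm.sign (flipPerm q ε) = (-1) ^ s.card := by
  induction s using Finset.induction_on with
  | empty =>
    intro ε hε
    have h1 : ∀ i, ε i = false := by
      intro i; have := hε i; simpa using this
    have : flipPerm q ε = 1 := by
      ext j
      show (flipFun q ε j).1 = j.1
      rw [flipFun_val, h1]
      simp
    rw [this]; simp
  | @insert a s' ha ih =>
    intro ε hε
    have hεa : ε a = true := (hε a).2 (Finset.mem_insert_self a s')
    have hε' : ∀ i, (Function.update ε a false) i = true ↔ i ∈ s' := by
      intro i
      by_cases hia : i = a
      · subst hia
        simp [Function.update_self, ha]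
      · rw [Function.update_of_ne hia]
        rw [hε i, Finset.mem_insert]
        simp [hia]
    have hfix : ∀ (i : Fin q), i ≠ a → ∀ (b : Fin 2),
        Equiv.swap (Stmt.pidx q a 0) (Stmt.pidx q a 1) (Stmt.pidx q i b) = Stmt.pidx q i b := by
      intro i hia b
      apply Equiv.swap_apply_of_ne_of_ne <;>
        · simp only [Fin.ext_iff, pidx_val, ne_eq]
          have : i.1 ≠ a.1 := fun h => hia (Fin.ext h)
          have := b.2
          omega
    have hkey : flipPerm q ε =
        Equiv.swap (Stmt.pidx q a 0) (Stmt.pidx q a 1) * flipPerm q (Function.update ε a false) := by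
      have key : ∀ (i : Fin q) (b : Fin 2), flipPerm q ε (Stmt.pidx q i b) =
          Equiv.swap (Stmt.pidx q a 0) (Stmt.pidx q a 1)
            (flipPerm q (Function.update ε a false) (Stmt.pidx q i b)) := by
        intro i b
        by_cases hia : i = a
        · subst hia
          fin_cases b
          · show flipPerm q ε (Stmt.pidx q i 0) = Equiv.swap (Stmt.pidx q i 0) (Stmt.pidx q i 1)
                (flipPerm q (Function.update ε i false) (Stmt.pidx q i 0))
            rw [flipPerm_apply, flipPerm_apply, flipFun_pidx0, flipFun_pidx0, hεa,
              Function.update_self]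
            simp [Equiv.swap_apply_left]
          · show flipPerm q ε (Stmt.pidx q i 1) = Equiv.swap (Stmt.pidx q i 0) (Stmt.pidx q i 1)
                (flipPerm q (Function.update ε i false) (Stmt.pidx q i 1))
            rw [flipPerm_apply, flipPerm_apply, flipFun_pidx1, flipFun_pidx1, hεa,
              Function.update_self]
            simp [Equiv.swap_apply_right]
        · have heq : (Function.update ε a false) i = ε i := Function.update_of_ne hia _ _
          fin_cases b
          · show flipPerm q ε (Stmt.pidx q i 0) = Equiv.swap (Stmt.pidx q a 0) (Stmt.pidx q a 1)
                (flipPerm q (Function.update ε a false) (Stmt.pidx q i 0))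
            rw [flipPerm_apply, flipPerm_apply, flipFun_pidx0, flipFun_pidx0, heq]
            by_cases hi : ε i = true
            · rw [if_pos hi]; exact (hfix i hia _).symm
            · rw [if_neg hi]; exact (hfix i hia _).symm
          · show flipPerm q ε (Stmt.pidx q i 1) = Equiv.swap (Stmt.pidx q a 0) (Stmt.pidx q a 1)
                (flipPerm q (Function.update ε a false) (Stmt.pidx q i 1))
            rw [flipPerm_apply, flipPerm_apply, flipFun_pidx1, flipFun_pidx1, heq]
            by_cases hi : ε i = true
            · rw [if_pos hi]; exact (hfix i hia _).symm
            · rw [if_neg hi]; exact (hfix i hia _).symm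
      ext j
      rw [eq_pidx q j]
      exact congrArg Fin.val (key _ _)
    rw [hkey, map_mul, Equiv.Perm.sign_swap (pidx_ne q a), ih _ hε',
      Finset.card_insert_of_notMem ha, pow_succ, mul_comm]

lemma sign_flipPerm (q : ℕ) (ε : Fin q → Bool) :
    Equiv.Perm.sign (flipPerm q ε) =
      (-1) ^ (Finset.univ.filter (fun i => ε i = true)).card :=
  sign_flipPerm_aux q _ ε (by simp)
variable {W : Type*} [AddCommGroup W] [Module ℂ W]

def wterm (q : ℕ) (ω : Fin q → W → W → ℂ) (x : Fin (q + q) → W)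
    (σ : Equiv.Perm (Fin (q + q))) : ℂ :=
  ((Equiv.Perm.sign σ : ℤ) : ℂ) *
    ∏ i : Fin q, ω i (x (σ (Stmt.pidx q i 0))) (x (σ (Stmt.pidx q i 1)))

def cond (q : ℕ) (σ : Equiv.Perm (Fin (q + q))) : Prop :=
  ∀ i : Fin q, σ (Stmt.pidx q i 0) < σ (Stmt.pidx q i 1)

lemma wedgeMany_eq (q : ℕ) (ω : Fin q → W → W → ℂ) (x : Fin (q + q) → W) :
    Stmt.wedgeMany q (fun i v => ω i (v 0) (v 1)) x =
      ∑ σ : Equiv.Perm (Fin (q + q)), if cond q σ then wterm q ω x σ else 0 := by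
  rw [Stmt.wedgeMany]
  apply Finset.sum_congr rfl
  intro σ _
  by_cases h : cond q σ
  · rw [if_pos h,
      if_pos (show ∀ i : Fin q, σ (Stmt.pidx q i 0) < σ (Stmt.pidx q i 1) from h)]
    rfl
  · rw [if_neg h,
      if_neg (show ¬ ∀ i : Fin q, σ (Stmt.pidx q i 0) < σ (Stmt.pidx q i 1) from h)]

lemma wterm_mul_flipPerm (q : ℕ) (ω : Fin q → W → W → ℂ)
    (hskew : ∀ (i : Fin q) (u w : W), ω i w u = - ω i u w)
    (x : Fin (q + q) → W) (π : Equiv.Perm (Fin (q + q))) (ε : Fin q → Bool) :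
    wterm q ω x (π * flipPerm q ε) = wterm q ω x π := by
  classical
  set c := (Finset.univ.filter (fun i => ε i = true)).card with hc
  unfold wterm
  have hsign : ((Equiv.Perm.sign (π * flipPerm q ε) : ℤ) : ℂ)
      = ((Equiv.Perm.sign π : ℤ) : ℂ) * (-1) ^ c := by
    rw [map_mul, sign_flipPerm]
    push_cast
    ring
  have hprod : (∏ i : Fin q, ω i (x ((π * flipPerm q ε) (Stmt.pidx q i 0)))
        (x ((π * flipPerm q ε) (Stmt.pidx q i 1))))
      = (-1 : ℂ) ^ c * ∏ i : Fin q, ω i (x (π (Stmt.pidx q i 0))) (x (π (Stmt.pidx q i 1))) := by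
    have step : ∀ i : Fin q, ω i (x ((π * flipPerm q ε) (Stmt.pidx q i 0)))
        (x ((π * flipPerm q ε) (Stmt.pidx q i 1)))
        = (if ε i then (-1 : ℂ) else 1) *
          ω i (x (π (Stmt.pidx q i 0))) (x (π (Stmt.pidx q i 1))) := by
      intro i
      rw [Equiv.Perm.mul_apply, Equiv.Perm.mul_apply, flipPerm_apply, flipPerm_apply,
        flipFun_pidx0, flipFun_pidx1]
      by_cases hi : ε i
      · rw [if_pos hi, if_pos hi, if_pos hi, hskew i]
        ring
      · rw [if_neg hi, if_neg hi, if_neg hi, one_mul]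
    rw [Finset.prod_congr rfl (fun i _ => step i), Finset.prod_mul_distrib]
    congr 1
    rw [Finset.prod_ite, Finset.prod_const, Finset.prod_const, one_pow, mul_one, hc]
  rw [hsign, hprod]
  have hone : ((-1 : ℂ) ^ c) * ((-1 : ℂ) ^ c) = 1 := by
    rw [← mul_pow]; norm_num
  calc ((Equiv.Perm.sign π : ℤ) : ℂ) * (-1) ^ c *
        ((-1) ^ c * ∏ i : Fin q, ω i (x (π (Stmt.pidx q i 0))) (x (π (Stmt.pidx q i 1))))
      = ((Equiv.Perm.sign π : ℤ) : ℂ) * (((-1 : ℂ) ^ c * (-1 : ℂ) ^ c) *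
        ∏ i : Fin q, ω i (x (π (Stmt.pidx q i 0))) (x (π (Stmt.pidx q i 1)))) := by ring
    _ = _ := by rw [hone, one_mul]

def epsOf (q : ℕ) (π : Equiv.Perm (Fin (q + q))) : Fin q → Bool :=
  fun i => decide (π (Stmt.pidx q i 1) < π (Stmt.pidx q i 0))

def sortPerm (q : ℕ) (π : Equiv.Perm (Fin (q + q))) : Equiv.Perm (Fin (q + q)) :=
  π * flipPerm q (epsOf q π)

lemma sortPerm_cond (q : ℕ) (π : Equiv.Perm (Fin (q + q))) : cond q (sortPerm q π) := by
  intro i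
  show (π * flipPerm q (epsOf q π)) _ < (π * flipPerm q (epsOf q π)) _
  rw [Equiv.Perm.mul_apply, Equiv.Perm.mul_apply, flipPerm_apply, flipPerm_apply,
    flipFun_pidx0, flipFun_pidx1]
  by_cases hi : epsOf q π i
  · rw [if_pos hi, if_pos hi]
    exact of_decide_eq_true hi
  · rw [if_neg hi, if_neg hi]
    have hne : π (Stmt.pidx q i 0) ≠ π (Stmt.pidx q i 1) := (Equiv.injective π).ne (pidx_ne q i)
    have : ¬ (π (Stmt.pidx q i 1) < π (Stmt.pidx q i 0)) := by
      intro h; exact hi (decide_eq_true h)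
    exact lt_of_le_of_ne (not_lt.1 this) hne

lemma flipPerm_false (q : ℕ) : flipPerm q (fun _ => false) = 1 := by
  ext j
  show (flipFun q (fun _ => false) j).1 = j.1
  rw [flipFun_val]
  simp

lemma epsOf_mul_flipPerm (q : ℕ) (π : Equiv.Perm (Fin (q + q))) (h : cond q π)
    (ε : Fin q → Bool) : epsOf q (π * flipPerm q ε) = ε := by
  funext i
  unfold epsOf
  rw [Equiv.Perm.mul_apply, Equiv.Perm.mul_apply, flipPerm_apply, flipPerm_apply,
    flipFun_pidx0, flipFun_pidx1]
  by_cases hi : ε i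
  · rw [if_pos hi, if_pos hi, hi]
    exact decide_eq_true (h i)
  · rw [if_neg hi, if_neg hi]
    rw [Bool.eq_false_iff.2 hi]  -- ε i = false
    exact decide_eq_false (not_lt.2 (le_of_lt (h i)))

lemma sort_inv (q : ℕ) (π : Equiv.Perm (Fin (q + q))) (h : cond q π) (ε : Fin q → Bool) :
    sortPerm q (π * flipPerm q ε) = π := by
  rw [sortPerm, epsOf_mul_flipPerm q π h ε, mul_assoc, flipPerm_mul_self, mul_one]

lemma wterm_swap_left (q : ℕ) (ω : Fin q → W → W → ℂ) (x : Fin (q + q) → W)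
    (a b : Fin (q + q)) (hab : a ≠ b) (hx : x a = x b) (σ : Equiv.Perm (Fin (q + q))) :
    wterm q ω x (Equiv.swap a b * σ) = - wterm q ω x σ := by
  unfold wterm
  have hxτ : ∀ j, x (Equiv.swap a b j) = x j := by
    intro j
    by_cases hj : j = a
    · subst hj; rw [Equiv.swap_apply_left]; exact hx.symm
    · by_cases hj' : j = b
      · subst hj'; rw [Equiv.swap_apply_right]; exact hx
      · rw [Equiv.swap_apply_of_ne_of_ne hj hj']
  have hprod : (∏ i : Fin q, ω i (x ((Equiv.swap a b * σ) (Stmt.pidx q i 0)))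
        (x ((Equiv.swap a b * σ) (Stmt.pidx q i 1))))
      = ∏ i : Fin q, ω i (x (σ (Stmt.pidx q i 0))) (x (σ (Stmt.pidx q i 1))) := by
    apply Finset.prod_congr rfl
    intro i _
    rw [Equiv.Perm.mul_apply, Equiv.Perm.mul_apply, hxτ, hxτ]
  rw [hprod, map_mul, Equiv.Perm.sign_swap hab]
  push_cast
  ring

lemma wedge_alt (q : ℕ) (ω : Fin q → W → W → ℂ)
    (hskew : ∀ (i : Fin q) (u w : W), ω i w u = - ω i u w)
    (x : Fin (q + q) → W) (a b : Fin (q + q)) (hab : a ≠ b) (hx : x a = x b) :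
    Stmt.wedgeMany q (fun i v => ω i (v 0) (v 1)) x = 0 := by
  classical
  rw [wedgeMany_eq]
  set f : Equiv.Perm (Fin (q + q)) → ℂ := fun σ => if cond q σ then wterm q ω x σ else 0 with hf
  let g : ∀ σ ∈ (Finset.univ : Finset (Equiv.Perm (Fin (q + q)))), Equiv.Perm (Fin (q + q)) :=
    fun σ _ => if cond q σ then sortPerm q (Equiv.swap a b * σ) else σ
  have hadd : ∀ σ (hσ : σ ∈ Finset.univ), f σ + f (g σ hσ) = 0 := by
    intro σ hσ
    by_cases h : cond q σ
    · have h2 : cond q (sortPerm q (Equiv.swap a b * σ)) := sortPerm_cond q _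
      simp only [hf, g, if_pos h, if_pos h2]
      rw [show sortPerm q (Equiv.swap a b * σ)
          = (Equiv.swap a b * σ) * flipPerm q (epsOf q (Equiv.swap a b * σ)) from rfl]
      rw [wterm_mul_flipPerm q ω hskew x, wterm_swap_left q ω x a b hab hx σ]
      ring
    · simp only [hf, g, if_neg h]
      simp
  refine Finset.sum_involution g hadd ?_ (fun σ hσ => Finset.mem_univ _) ?_
  · intro σ hσ hne heq
    have h0 := hadd σ hσ
    rw [heq] at h0
    exact hne (add_self_eq_zero.mp h0)
  · intro σ hσ
    by_cases h : cond q σ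
    · have h2 : cond q (sortPerm q (Equiv.swap a b * σ)) := sortPerm_cond q _
      simp only [g, if_pos h, if_pos h2]
      rw [show sortPerm q (Equiv.swap a b * σ)
          = (Equiv.swap a b * σ) * flipPerm q (epsOf q (Equiv.swap a b * σ)) from rfl]
      rw [← mul_assoc, ← mul_assoc, Equiv.swap_mul_self, one_mul, sort_inv q σ h]
    · simp only [g, if_neg h]
lemma wterm_update_form (q : ℕ) (ω : Fin q → W → W → ℂ) (x : Fin (q + q) → W)
    (σ : Equiv.Perm (Fin (q + q))) (j : Fin (q + q)) :
    ∃ (i₀ : Fin q) (a : W) (c : ℂ) (s : Bool), ∀ Y : W,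
      wterm q ω (Function.update x j Y) σ = c * (if s then ω i₀ Y a else ω i₀ a Y) := by
  classical
  set p := σ.symm j with hpdef
  have hp : σ p = j := Equiv.apply_symm_apply σ j
  set i₀ : Fin q := ⟨p.1 / 2, by have := p.2; omega⟩ with hi₀def
  have hpi : ∀ (i : Fin q) (b : Fin 2), i ≠ i₀ → σ (Stmt.pidx q i b) ≠ j := by
    intro i b hi hEq
    apply hi
    have h1 : Stmt.pidx q i b = p := by
      rw [hpdef]
      exact (Equiv.symm_apply_eq σ).2 hEq.symm |>.symm
    have h2 : (Stmt.pidx q i b).1 = p.1 := congrArg Fin.val h1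
    rw [pidx_val] at h2
    have := b.2
    ext
    show i.1 = p.1 / 2
    omega
  have herase : ∀ Y : W, (∏ i ∈ Finset.univ.erase i₀,
        ω i (Function.update x j Y (σ (Stmt.pidx q i 0)))
          (Function.update x j Y (σ (Stmt.pidx q i 1))))
      = ∏ i ∈ Finset.univ.erase i₀, ω i (x (σ (Stmt.pidx q i 0))) (x (σ (Stmt.pidx q i 1))) := by
    intro Y
    apply Finset.prod_congr rfl
    intro i hi
    have hi' : i ≠ i₀ := (Finset.mem_erase.1 hi).1
    rw [Function.update_of_ne (hpi i 0 hi'), Function.update_of_ne (hpi i 1 hi')]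
  by_cases hb : p.1 % 2 = 0
  · have hp0 : Stmt.pidx q i₀ 0 = p := by
      ext; rw [pidx_val]; rw [hi₀def]; simp; omega
    have hne1 : σ (Stmt.pidx q i₀ 1) ≠ j := by
      intro hEq
      have h1 : Stmt.pidx q i₀ 1 = p := (Equiv.symm_apply_eq σ).2 hEq.symm |>.symm
      have h2 := congrArg Fin.val h1
      rw [pidx_val] at h2
      rw [hi₀def] at h2
      simp at h2
      omega
    refine ⟨i₀, x (σ (Stmt.pidx q i₀ 1)),
      ((Equiv.Perm.sign σ : ℤ) : ℂ) * ∏ i ∈ Finset.univ.erase i₀,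
        ω i (x (σ (Stmt.pidx q i 0))) (x (σ (Stmt.pidx q i 1))), true, ?_⟩
    intro Y
    unfold wterm
    rw [← Finset.mul_prod_erase Finset.univ _ (Finset.mem_univ i₀), herase Y, hp0, hp,
      Function.update_self, Function.update_of_ne hne1]
    simp only [if_true]
    ring
  · have hp1 : Stmt.pidx q i₀ 1 = p := by
      ext; rw [pidx_val]; rw [hi₀def]; simp; omega
    have hne0 : σ (Stmt.pidx q i₀ 0) ≠ j := by
      intro hEq
      have h1 : Stmt.pidx q i₀ 0 = p := (Equiv.symm_apply_eq σ).2 hEq.symm |>.symm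
      have h2 := congrArg Fin.val h1
      rw [pidx_val] at h2
      rw [hi₀def] at h2
      simp at h2
      omega
    refine ⟨i₀, x (σ (Stmt.pidx q i₀ 0)),
      ((Equiv.Perm.sign σ : ℤ) : ℂ) * ∏ i ∈ Finset.univ.erase i₀,
        ω i (x (σ (Stmt.pidx q i 0))) (x (σ (Stmt.pidx q i 1))), false, ?_⟩
    intro Y
    unfold wterm
    rw [← Finset.mul_prod_erase Finset.univ _ (Finset.mem_univ i₀), herase Y, hp1, hp,
      Function.update_self, Function.update_of_ne hne0]
    simp only [Bool.false_eq_true, if_false]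
    ring

lemma wedge_update_add (q : ℕ) (ω : Fin q → W → W → ℂ)
    (hadd1 : ∀ (i : Fin q) (u u' w : W), ω i (u + u') w = ω i u w + ω i u' w)
    (hadd2 : ∀ (i : Fin q) (u w w' : W), ω i u (w + w') = ω i u w + ω i u w')
    (x : Fin (q + q) → W) (j : Fin (q + q)) (y z : W) :
    Stmt.wedgeMany q (fun i v => ω i (v 0) (v 1)) (Function.update x j (y + z)) =
      Stmt.wedgeMany q (fun i v => ω i (v 0) (v 1)) (Function.update x j y) +
      Stmt.wedgeMany q (fun i v => ω i (v 0) (v 1)) (Function.update x j z) := by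
  classical
  rw [wedgeMany_eq, wedgeMany_eq, wedgeMany_eq, ← Finset.sum_add_distrib]
  apply Finset.sum_congr rfl
  intro σ _
  by_cases h : cond q σ
  · rw [if_pos h, if_pos h, if_pos h]
    obtain ⟨i₀, a, c, s, hform⟩ := wterm_update_form q ω x σ j
    rw [hform, hform, hform]
    cases s
    · simp only [Bool.false_eq_true, if_false]
      rw [hadd2]; ring
    · simp only [if_true]
      rw [hadd1]; ring
  · rw [if_neg h, if_neg h, if_neg h]; ring

lemma wedge_update_smul (q : ℕ) (ω : Fin q → W → W → ℂ)
    (hsm1 : ∀ (i : Fin q) (t : ℂ) (u w : W), ω i (t • u) w = t * ω i u w)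
    (hsm2 : ∀ (i : Fin q) (t : ℂ) (u w : W), ω i u (t • w) = t * ω i u w)
    (x : Fin (q + q) → W) (j : Fin (q + q)) (t : ℂ) (y : W) :
    Stmt.wedgeMany q (fun i v => ω i (v 0) (v 1)) (Function.update x j (t • y)) =
      t * Stmt.wedgeMany q (fun i v => ω i (v 0) (v 1)) (Function.update x j y) := by
  classical
  rw [wedgeMany_eq, wedgeMany_eq, Finset.mul_sum]
  apply Finset.sum_congr rfl
  intro σ _
  by_cases h : cond q σ
  · rw [if_pos h, if_pos h]
    obtain ⟨i₀, a, c, s, hform⟩ := wterm_update_form q ω x σ j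
    rw [hform, hform]
    cases s
    · simp only [Bool.false_eq_true, if_false]
      rw [hsm2]; ring
    · simp only [if_true]
      rw [hsm1]; ring
  · rw [if_neg h, if_neg h]; ring

lemma wedge_update_zero (q : ℕ) (ω : Fin q → W → W → ℂ)
    (hsm1 : ∀ (i : Fin q) (t : ℂ) (u w : W), ω i (t • u) w = t * ω i u w)
    (hsm2 : ∀ (i : Fin q) (t : ℂ) (u w : W), ω i u (t • w) = t * ω i u w)
    (x : Fin (q + q) → W) (j : Fin (q + q)) :
    Stmt.wedgeMany q (fun i v => ω i (v 0) (v 1)) (Function.update x j 0) = 0 := by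
  have := wedge_update_smul q ω hsm1 hsm2 x j 0 0
  rw [zero_smul] at this
  rw [this, zero_mul]

lemma wedge_update_sum (q : ℕ) (ω : Fin q → W → W → ℂ)
    (hadd1 : ∀ (i : Fin q) (u u' w : W), ω i (u + u') w = ω i u w + ω i u' w)
    (hadd2 : ∀ (i : Fin q) (u w w' : W), ω i u (w + w') = ω i u w + ω i u w')
    (hsm1 : ∀ (i : Fin q) (t : ℂ) (u w : W), ω i (t • u) w = t * ω i u w)
    (hsm2 : ∀ (i : Fin q) (t : ℂ) (u w : W), ω i u (t • w) = t * ω i u w)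
    (x : Fin (q + q) → W) (j : Fin (q + q)) {ι : Type*} [Fintype ι] (s : Finset ι)
    (c : ι → ℂ) (y : ι → W) :
    Stmt.wedgeMany q (fun i v => ω i (v 0) (v 1)) (Function.update x j (∑ k ∈ s, c k • y k)) =
      ∑ k ∈ s, c k * Stmt.wedgeMany q (fun i v => ω i (v 0) (v 1)) (Function.update x j (y k)) := by
  classical
  induction s using Finset.induction_on with
  | empty => simpa using wedge_update_zero q ω hsm1 hsm2 x j
  | @insert a s' ha ih =>
    rw [Finset.sum_insert ha, Finset.sum_insert ha, wedge_update_add q ω hadd1 hadd2, ih,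
      wedge_update_smul q ω hsm1 hsm2]

lemma wedge_contract (q : ℕ) (ω : Fin q → W → W → ℂ) (x : Fin (q + q) → W) (v : W)
    (hv : ∀ (i : Fin q) (u : W), ω i v u = 0 ∧ ω i u v = 0)
    (j : Fin (q + q)) (hj : x j = v) :
    Stmt.wedgeMany q (fun i v => ω i (v 0) (v 1)) x = 0 := by
  classical
  rw [wedgeMany_eq]
  apply Finset.sum_eq_zero
  intro σ _
  split
  · unfold wterm
    apply mul_eq_zero_of_right
    set p := σ.symm j with hpdef
    have hp : σ p = j := Equiv.apply_symm_apply σ j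
    set i₀ : Fin q := ⟨p.1 / 2, by have := p.2; omega⟩ with hi₀def
    apply Finset.prod_eq_zero (Finset.mem_univ i₀)
    by_cases hb : p.1 % 2 = 0
    · have hp0 : Stmt.pidx q i₀ 0 = p := by
        ext; rw [pidx_val]; rw [hi₀def]; simp; omega
      rw [hp0, hp, hj]
      exact (hv i₀ _).1
    · have hp1 : Stmt.pidx q i₀ 1 = p := by
        ext; rw [pidx_val]; rw [hi₀def]; simp; omega
      rw [hp1, hp, hj]
      exact (hv i₀ _).2
  · rfl

lemma key_vanish (q : ℕ) [FiniteDimensional ℂ W] (ω : Fin q → W → W → ℂ)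
    (hadd1 : ∀ (i : Fin q) (u u' w : W), ω i (u + u') w = ω i u w + ω i u' w)
    (hadd2 : ∀ (i : Fin q) (u w w' : W), ω i u (w + w') = ω i u w + ω i u w')
    (hsm1 : ∀ (i : Fin q) (t : ℂ) (u w : W), ω i (t • u) w = t * ω i u w)
    (hsm2 : ∀ (i : Fin q) (t : ℂ) (u w : W), ω i u (t • w) = t * ω i u w)
    (hskew : ∀ (i : Fin q) (u w : W), ω i w u = - ω i u w)
    (hdim : Module.finrank ℂ W = q + q)
    (x : Fin (q + q) → W) (hx : Stmt.wedgeMany q (fun i v => ω i (v 0) (v 1)) x ≠ 0)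
    (v : W) (hv : ∀ (i : Fin q) (u : W), ω i v u = 0 ∧ ω i u v = 0) : v = 0 := by
  classical
  rcases Nat.eq_zero_or_pos q with hq | hq
  · subst hq
    have : Module.finrank ℂ W = 0 := by simpa using hdim
    have : Subsingleton W := Module.finrank_zero_iff.mp this
    exact Subsingleton.elim v 0
  have : Nonempty (Fin (q + q)) := ⟨⟨0, by omega⟩⟩
  have hcoeff : ∀ (c : Fin (q + q) → ℂ) (u : W), (∑ k, c k • x k) = u →
      ∀ j : Fin (q + q),
        Stmt.wedgeMany q (fun i v => ω i (v 0) (v 1)) (Function.update x j u)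
          = c j * Stmt.wedgeMany q (fun i v => ω i (v 0) (v 1)) x := by
    intro c u hu j
    rw [← hu, wedge_update_sum q ω hadd1 hadd2 hsm1 hsm2]
    rw [Finset.sum_eq_single j]
    · rw [Function.update_eq_self]
    · intro k _ hkj
      have hzero : Stmt.wedgeMany q (fun i v => ω i (v 0) (v 1))
          (Function.update x j (x k)) = 0 := by
        apply wedge_alt q ω hskew _ j k (Ne.symm hkj)
        rw [Function.update_self, Function.update_of_ne hkj]
      rw [hzero, mul_zero]
    · intro h; exact absurd (Finset.mem_univ j) h
  have hind : LinearIndependent ℂ x := by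
    rw [Fintype.linearIndependent_iff]
    intro c hc j
    have h1 := hcoeff c 0 hc j
    rw [wedge_update_zero q ω hsm1 hsm2] at h1
    exact (mul_eq_zero.mp h1.symm).resolve_right hx
  have hspan : Submodule.span ℂ (Set.range x) = ⊤ :=
    hind.span_eq_top_of_card_eq_finrank (by simp [hdim])
  have hvmem : v ∈ Submodule.span ℂ (Set.range x) := by rw [hspan]; trivial
  obtain ⟨c, hc⟩ := (Submodule.mem_span_range_iff_exists_fun ℂ).1 hvmem
  have hczero : ∀ j, c j = 0 := by
    intro j
    have h1 := hcoeff c v hc j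
    have h2 : Stmt.wedgeMany q (fun i v => ω i (v 0) (v 1)) (Function.update x j v) = 0 := by
      apply wedge_contract q ω _ v hv j
      rw [Function.update_self]
    rw [h2] at h1
    exact (mul_eq_zero.mp h1.symm).resolve_right hx
  rw [← hc]
  simp [hczero]
def bpFun (q : ℕ) (τ : Equiv.Perm (Fin q)) (j : Fin (q + q)) : Fin (q + q) :=
  Stmt.pidx q (τ ⟨j.1 / 2, by have := j.2; omega⟩) ⟨j.1 % 2, by omega⟩

lemma bpFun_pidx (q : ℕ) (τ : Equiv.Perm (Fin q)) (i : Fin q) (b : Fin 2) :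
    bpFun q τ (Stmt.pidx q i b) = Stmt.pidx q (τ i) b := by
  unfold bpFun
  have h1 : (⟨(Stmt.pidx q i b).1 / 2, by have := (Stmt.pidx q i b).2; omega⟩ : Fin q) = i := by
    ext
    show (Stmt.pidx q i b).1 / 2 = i.1
    rw [pidx_val]; have := b.2; omega
  have h2 : (⟨(Stmt.pidx q i b).1 % 2, by omega⟩ : Fin 2) = b := by
    ext
    show (Stmt.pidx q i b).1 % 2 = b.1
    rw [pidx_val]; have := b.2; omega
  rw [h1, h2]

lemma bpFun_inj (q : ℕ) (τ : Equiv.Perm (Fin q)) : Function.Injective (bpFun q τ) := by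
  intro j j' h
  rw [eq_pidx q j, eq_pidx q j'] at h ⊢
  rw [bpFun_pidx, bpFun_pidx] at h
  have hval := congrArg Fin.val h
  rw [pidx_val, pidx_val] at hval
  have h2 : (τ ⟨j.1 / 2, by have := j.2; omega⟩) = (τ ⟨j'.1 / 2, by have := j'.2; omega⟩) := by
    ext
    have := (⟨j.1 % 2, by omega⟩ : Fin 2).2
    have := (⟨j'.1 % 2, by omega⟩ : Fin 2).2
    omega
  have h3 := τ.injective h2
  have h4 := congrArg Fin.val h3
  simp only [Fin.val_mk] at h4 hval
  ext
  rw [pidx_val, pidx_val]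
  simp
  omega

def blockPerm (q : ℕ) (τ : Equiv.Perm (Fin q)) : Equiv.Perm (Fin (q + q)) :=
  Equiv.ofBijective (bpFun q τ) (Finite.injective_iff_bijective.mp (bpFun_inj q τ))

lemma blockPerm_pidx (q : ℕ) (τ : Equiv.Perm (Fin q)) (i : Fin q) (b : Fin 2) :
    blockPerm q τ (Stmt.pidx q i b) = Stmt.pidx q (τ i) b := bpFun_pidx q τ i b

lemma blockPerm_mul (q : ℕ) (τ τ' : Equiv.Perm (Fin q)) :
    blockPerm q (τ * τ') = blockPerm q τ * blockPerm q τ' := by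
  ext j
  rw [eq_pidx q j]
  rw [Equiv.Perm.mul_apply, blockPerm_pidx, blockPerm_pidx, blockPerm_pidx,
    Equiv.Perm.mul_apply]

lemma blockPerm_one (q : ℕ) : blockPerm q (1 : Equiv.Perm (Fin q)) = 1 := by
  ext j
  rw [eq_pidx q j, blockPerm_pidx]
  rfl

lemma pidx_ne_of_ne (q : ℕ) (i i' : Fin q) (b b' : Fin 2) (h : i.1 ≠ i'.1) :
    Stmt.pidx q i b ≠ Stmt.pidx q i' b' := by
  intro hEq
  have := congrArg Fin.val hEq
  rw [pidx_val, pidx_val] at this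
  have := b.2; have := b'.2
  omega

lemma pidx_ne_parity (q : ℕ) (i i' : Fin q) : Stmt.pidx q i 0 ≠ Stmt.pidx q i' 1 := by
  intro hEq
  have := congrArg Fin.val hEq
  rw [pidx_val, pidx_val] at this
  omega

lemma sign_blockPerm (q : ℕ) (τ : Equiv.Perm (Fin q)) :
    Equiv.Perm.sign (blockPerm q τ) = 1 := by
  refine Equiv.Perm.swap_induction_on τ (by rw [blockPerm_one]; simp) ?_
  intro f a b hab ih
  rw [blockPerm_mul, map_mul, ih, mul_one]
  have hvab : a.1 ≠ b.1 := fun h => hab (Fin.ext h)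
  have hkey : blockPerm q (Equiv.swap a b) =
      Equiv.swap (Stmt.pidx q a 0) (Stmt.pidx q b 0) *
        Equiv.swap (Stmt.pidx q a 1) (Stmt.pidx q b 1) := by
    have key : ∀ (i : Fin q) (c : Fin 2), blockPerm q (Equiv.swap a b) (Stmt.pidx q i c) =
        (Equiv.swap (Stmt.pidx q a 0) (Stmt.pidx q b 0) *
          Equiv.swap (Stmt.pidx q a 1) (Stmt.pidx q b 1)) (Stmt.pidx q i c) := by
      intro i c
      rw [blockPerm_pidx, Equiv.Perm.mul_apply]
      by_cases hia : i = a
      · subst hia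
        rw [Equiv.swap_apply_left]
        fin_cases c
        · show Stmt.pidx q b 0 = Equiv.swap (Stmt.pidx q i 0) (Stmt.pidx q b 0)
              (Equiv.swap (Stmt.pidx q i 1) (Stmt.pidx q b 1) (Stmt.pidx q i 0))
          rw [Equiv.swap_apply_of_ne_of_ne (pidx_ne q i) (pidx_ne_parity q i b),
            Equiv.swap_apply_left]
        · show Stmt.pidx q b 1 = Equiv.swap (Stmt.pidx q i 0) (Stmt.pidx q b 0)
              (Equiv.swap (Stmt.pidx q i 1) (Stmt.pidx q b 1) (Stmt.pidx q i 1))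
          rw [Equiv.swap_apply_left,
            Equiv.swap_apply_of_ne_of_ne (Ne.symm (pidx_ne_parity q i b))
              (Ne.symm (pidx_ne q b))]
      · by_cases hib : i = b
        · subst hib
          rw [Equiv.swap_apply_right]
          fin_cases c
          · show Stmt.pidx q a 0 = Equiv.swap (Stmt.pidx q a 0) (Stmt.pidx q i 0)
                (Equiv.swap (Stmt.pidx q a 1) (Stmt.pidx q i 1) (Stmt.pidx q i 0))
            rw [Equiv.swap_apply_of_ne_of_ne (pidx_ne_parity q i a) (pidx_ne q i),
              Equiv.swap_apply_right]
          · show Stmt.pidx q a 1 = Equiv.swap (Stmt.pidx q a 0) (Stmt.pidx q i 0)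
                (Equiv.swap (Stmt.pidx q a 1) (Stmt.pidx q i 1) (Stmt.pidx q i 1))
            rw [Equiv.swap_apply_right,
              Equiv.swap_apply_of_ne_of_ne (Ne.symm (pidx_ne q a))
                (Ne.symm (pidx_ne_parity q i a))]
        · have hva : i.1 ≠ a.1 := fun h => hia (Fin.ext h)
          have hvb : i.1 ≠ b.1 := fun h => hib (Fin.ext h)
          rw [Equiv.swap_apply_of_ne_of_ne hia hib,
            Equiv.swap_apply_of_ne_of_ne (pidx_ne_of_ne q i a _ _ hva)
              (pidx_ne_of_ne q i b _ _ hvb),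
            Equiv.swap_apply_of_ne_of_ne (pidx_ne_of_ne q i a _ _ hva)
              (pidx_ne_of_ne q i b _ _ hvb)]
    ext j
    rw [eq_pidx q j]
    exact congrArg Fin.val (key _ _)
  rw [hkey, map_mul, Equiv.Perm.sign_swap (pidx_ne_of_ne q a b _ _ hvab),
    Equiv.Perm.sign_swap (pidx_ne_of_ne q a b _ _ hvab)]
  simp

lemma blockPerm_inj (q : ℕ) : Function.Injective (blockPerm q) := by
  intro τ τ' h
  ext i
  have h1 : blockPerm q τ (Stmt.pidx q i 0) = blockPerm q τ' (Stmt.pidx q i 0) := by rw [h]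
  rw [blockPerm_pidx, blockPerm_pidx] at h1
  have := congrArg Fin.val h1
  rw [pidx_val, pidx_val] at this
  omega

lemma wedge_symplectic (q : ℕ) (ω : Fin q → W → W → ℂ) (e f : Fin q → W)
    (hee : ∀ (i : Fin q) (a b : Fin q), ω i (e a) (e b) = 0)
    (hff : ∀ (i : Fin q) (a b : Fin q), ω i (f a) (f b) = 0)
    (hef : ∀ (i : Fin q) (a b : Fin q), ω i (e a) (f b) = if a = b then 1 else 0)
    (hfe : ∀ (i : Fin q) (a b : Fin q), ω i (f a) (e b) = if a = b then -1 else 0) :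
    Stmt.wedgeMany q (fun i v => ω i (v 0) (v 1))
      (fun j => if j.1 % 2 = 0 then e ⟨j.1 / 2, by have := j.2; omega⟩
        else f ⟨j.1 / 2, by have := j.2; omega⟩) = (q.factorial : ℂ) := by
  classical
  set x : Fin (q + q) → W := fun j => if j.1 % 2 = 0 then e ⟨j.1 / 2, by have := j.2; omega⟩
        else f ⟨j.1 / 2, by have := j.2; omega⟩ with hxdef
  have hx0 : ∀ i : Fin q, x (Stmt.pidx q i 0) = e i := by
    intro i
    show (if (Stmt.pidx q i 0).1 % 2 = 0 then _ else _) = e i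
    rw [if_pos (by rw [pidx_val]; omega)]
    congr 1
    ext
    show (Stmt.pidx q i 0).1 / 2 = i.1
    rw [pidx_val]; omega
  have hx1 : ∀ i : Fin q, x (Stmt.pidx q i 1) = f i := by
    intro i
    show (if (Stmt.pidx q i 1).1 % 2 = 0 then _ else _) = f i
    rw [if_neg (by rw [pidx_val]; omega)]
    congr 1
    ext
    show (Stmt.pidx q i 1).1 / 2 = i.1
    rw [pidx_val]; omega
  rw [wedgeMany_eq]
  have hterm : ∀ τ : Equiv.Perm (Fin q),
      (if cond q (blockPerm q τ) then wterm q ω x (blockPerm q τ) else 0) = 1 := by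
    intro τ
    have hcond : cond q (blockPerm q τ) := by
      intro i
      rw [blockPerm_pidx, blockPerm_pidx]
      show (Stmt.pidx q (τ i) 0).1 < (Stmt.pidx q (τ i) 1).1
      rw [pidx_val, pidx_val]; omega
    rw [if_pos hcond]
    unfold wterm
    rw [sign_blockPerm]
    have hpr : (∏ i : Fin q, ω i (x (blockPerm q τ (Stmt.pidx q i 0)))
        (x (blockPerm q τ (Stmt.pidx q i 1)))) = 1 := by
      apply Finset.prod_eq_one
      intro i _
      rw [blockPerm_pidx, blockPerm_pidx, hx0, hx1, hef, if_pos rfl]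
    rw [hpr]
    simp
  have hzero : ∀ σ : Equiv.Perm (Fin (q + q)), σ ∉ Finset.univ.image (blockPerm q) →
      (if cond q σ then wterm q ω x σ else 0) = 0 := by
    intro σ hσ
    by_cases hcond : cond q σ
    swap
    · rw [if_neg hcond]
    rw [if_pos hcond]
    by_contra hne
    have hprod : (∏ i : Fin q, ω i (x (σ (Stmt.pidx q i 0))) (x (σ (Stmt.pidx q i 1)))) ≠ 0 := by
      intro h0
      apply hne
      unfold wterm
      rw [h0, mul_zero]
    have hfac : ∀ i : Fin q, ω i (x (σ (Stmt.pidx q i 0))) (x (σ (Stmt.pidx q i 1))) ≠ 0 :=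
      fun i => Finset.prod_ne_zero_iff.1 hprod i (Finset.mem_univ i)
    have hxE : ∀ j : Fin (q + q), j.1 % 2 = 0 →
        x j = e ⟨j.1 / 2, by have := j.2; omega⟩ := by
      intro j hj
      show (if j.1 % 2 = 0 then _ else _) = _
      rw [if_pos hj]
    have hxO : ∀ j : Fin (q + q), ¬ (j.1 % 2 = 0) →
        x j = f ⟨j.1 / 2, by have := j.2; omega⟩ := by
      intro j hj
      show (if j.1 % 2 = 0 then _ else _) = _
      rw [if_neg hj]
    have hblock : ∀ i : Fin q, (σ (Stmt.pidx q i 0)).1 % 2 = 0 ∧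
        (σ (Stmt.pidx q i 1)).1 = (σ (Stmt.pidx q i 0)).1 + 1 := by
      intro i
      have hAB : (σ (Stmt.pidx q i 0)).1 < (σ (Stmt.pidx q i 1)).1 := hcond i
      have hf := hfac i
      by_cases hA : (σ (Stmt.pidx q i 0)).1 % 2 = 0 <;>
        by_cases hB : (σ (Stmt.pidx q i 1)).1 % 2 = 0
      · exfalso; apply hf; rw [hxE _ hA, hxE _ hB, hee]
      · rw [hxE _ hA, hxO _ hB, hef] at hf
        split_ifs at hf with h'
        · have := congrArg Fin.val h'
          simp only [Fin.val_mk] at this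
          exact ⟨hA, by omega⟩
        · exact absurd rfl hf
      · exfalso
        rw [hxO _ hA, hxE _ hB, hfe] at hf
        split_ifs at hf with h'
        · have := congrArg Fin.val h'
          simp only [Fin.val_mk] at this
          omega
        · exact absurd rfl hf
      · exfalso; apply hf; rw [hxO _ hA, hxO _ hB, hff]
    have htinj : Function.Injective (fun i : Fin q =>
        (⟨(σ (Stmt.pidx q i 0)).1 / 2, by have := (σ (Stmt.pidx q i 0)).2; omega⟩ : Fin q)) := by
      intro i i' h
      have hv := congrArg Fin.val h
      simp only [Fin.val_mk] at hv
      have e1 := (hblock i).1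
      have e2 := (hblock i').1
      have h1 : (σ (Stmt.pidx q i 0)).1 = (σ (Stmt.pidx q i' 0)).1 := by omega
      have h2 := σ.injective (Fin.ext h1)
      have h3 := congrArg Fin.val h2
      rw [pidx_val, pidx_val] at h3
      ext
      omega
    apply hσ
    rw [Finset.mem_image]
    refine ⟨Equiv.ofBijective _ (Finite.injective_iff_bijective.mp htinj),
      Finset.mem_univ _, ?_⟩
    have key : ∀ (i : Fin q) (b : Fin 2),
        blockPerm q (Equiv.ofBijective _ (Finite.injective_iff_bijective.mp htinj))
          (Stmt.pidx q i b) = σ (Stmt.pidx q i b) := by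
      intro i b
      rw [blockPerm_pidx]
      have h0 := (hblock i).1
      have h1 := (hblock i).2
      fin_cases b
      · show Stmt.pidx q (⟨(σ (Stmt.pidx q i 0)).1 / 2, _⟩ : Fin q) 0 = σ (Stmt.pidx q i 0)
        ext
        rw [pidx_val]
        simp
        omega
      · show Stmt.pidx q (⟨(σ (Stmt.pidx q i 0)).1 / 2, _⟩ : Fin q) 1 = σ (Stmt.pidx q i 1)
        ext
        rw [pidx_val]
        simp
        omega
    ext j
    rw [eq_pidx q j]
    exact congrArg Fin.val (key _ _)
  rw [← Finset.sum_subset (Finset.subset_univ (Finset.univ.image (blockPerm q)))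
    (fun σ _ hσ => hzero σ hσ)]
  rw [Finset.sum_image (fun τ _ τ' _ h => blockPerm_inj q h)]
  rw [Finset.sum_congr rfl (fun τ _ => hterm τ)]
  simp only [Finset.sum_const, Finset.card_univ, nsmul_eq_mul, mul_one]
  rw [Fintype.card_perm, Fintype.card_fin]
section Symp
variable {W : Type*} [AddCommGroup W] [Module ℂ W]

lemma skew_of_alt (B : W →ₗ[ℂ] W →ₗ[ℂ] ℂ) (halt : ∀ v, B v v = 0) (u w : W) :
    B w u = - B u w := by
  have h := halt (u + w)
  rw [map_add B u w, LinearMap.add_apply, map_add, map_add, halt u, halt w] at h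
  linear_combination h

lemma symplectic_family [FiniteDimensional ℂ W]
    (B : W →ₗ[ℂ] W →ₗ[ℂ] ℂ) (halt : ∀ v, B v v = 0) :
    ∀ k : ℕ, Module.finrank ℂ (LinearMap.ker B) + 2 * k ≤ Module.finrank ℂ W + 1 →
    ∃ e f : Fin k → W,
      (∀ a b, B (e a) (e b) = 0) ∧ (∀ a b, B (f a) (f b) = 0) ∧
      (∀ a b, B (e a) (f b) = if a = b then 1 else 0) := by
  intro k
  induction k with
  | zero =>
    intro _
    exact ⟨fun i => i.elim0, fun i => i.elim0, fun a => a.elim0, fun a => a.elim0,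
      fun a => a.elim0⟩
  | succ k ih =>
    intro hdim'
    obtain ⟨e, f, hee, hff, hef⟩ := ih (by omega)
    -- the orthogonal complement of the span of the e's and f's
    set φ : W →ₗ[ℂ] ((Fin k → ℂ) × (Fin k → ℂ)) :=
      LinearMap.prod (LinearMap.pi (fun i => B (e i))) (LinearMap.pi (fun i => B (f i)))
      with hφdef
    set U := LinearMap.ker φ with hUdef
    have hUchar : ∀ u, u ∈ U ↔ ((∀ i, B (e i) u = 0) ∧ (∀ i, B (f i) u = 0)) := by
      intro u
      rw [hUdef, LinearMap.mem_ker, hφdef, LinearMap.prod_apply]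
      constructor
      · intro h
        have h1 := congrArg Prod.fst h
        have h2 := congrArg Prod.snd h
        simp only [Function.prod] at h1 h2
        constructor
        · intro i; exact congrFun h1 i
        · intro i; exact congrFun h2 i
      · intro ⟨h1, h2⟩
        have : LinearMap.pi (fun i => B (e i)) u = 0 := by
          ext i; exact h1 i
        have h2' : LinearMap.pi (fun i => B (f i)) u = 0 := by
          ext i; exact h2 i
        simp only [Function.prod, this, h2']
        rfl
    have hU : Module.finrank ℂ W ≤ Module.finrank ℂ U + 2 * k := by
      have h1 := LinearMap.finrank_range_add_finrank_ker φ
      have h2 : Module.finrank ℂ (LinearMap.range φ) ≤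
          Module.finrank ℂ ((Fin k → ℂ) × (Fin k → ℂ)) := Submodule.finrank_le _
      have h3 : Module.finrank ℂ ((Fin k → ℂ) × (Fin k → ℂ)) = 2 * k := by
        rw [Module.finrank_prod, Module.finrank_pi, Fintype.card_fin]
        omega
      have h4 : Module.finrank ℂ U = Module.finrank ℂ (LinearMap.ker φ) := rfl
      omega
    -- the span of the e's and f's
    set ψ : ((Fin k → ℂ) × (Fin k → ℂ)) →ₗ[ℂ] W :=
      LinearMap.coprod
        (∑ i : Fin k, LinearMap.smulRight (LinearMap.proj i) (e i))
        (∑ i : Fin k, LinearMap.smulRight (LinearMap.proj i) (f i)) with hψdef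
    have hψapp : ∀ ab : (Fin k → ℂ) × (Fin k → ℂ),
        ψ ab = (∑ i, ab.1 i • e i) + (∑ i, ab.2 i • f i) := by
      intro ab
      rw [hψdef, LinearMap.coprod_apply]
      congr 1 <;> rw [LinearMap.sum_apply] <;> exact Finset.sum_congr rfl (fun i _ => rfl)
    have hBeψ : ∀ (j : Fin k) (ab : (Fin k → ℂ) × (Fin k → ℂ)),
        B (e j) (ψ ab) = ab.2 j := by
      intro j ab
      rw [hψapp, map_add, map_sum, map_sum]
      have h1 : (∑ i, B (e j) (ab.1 i • e i)) = 0 := by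
        apply Finset.sum_eq_zero; intro i _; rw [map_smul, hee, smul_zero]
      have h2 : (∑ i, B (e j) (ab.2 i • f i)) = ab.2 j := by
        rw [Finset.sum_eq_single j]
        · rw [map_smul, hef, if_pos rfl, smul_eq_mul, mul_one]
        · intro i _ hij
          rw [map_smul, hef, if_neg (Ne.symm hij), smul_zero]
        · intro h; exact absurd (Finset.mem_univ j) h
      rw [h1, h2, zero_add]
    have hBfψ : ∀ (j : Fin k) (ab : (Fin k → ℂ) × (Fin k → ℂ)),
        B (f j) (ψ ab) = - ab.1 j := by
      intro j ab
      rw [hψapp, map_add, map_sum, map_sum]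
      have h1 : (∑ i, B (f j) (ab.1 i • e i)) = - ab.1 j := by
        rw [Finset.sum_eq_single j]
        · rw [map_smul, skew_of_alt B halt, hef, if_pos rfl, smul_eq_mul]
          ring
        · intro i _ hij
          rw [map_smul, skew_of_alt B halt, hef, if_neg hij, neg_zero, smul_zero]
        · intro h; exact absurd (Finset.mem_univ j) h
      have h2 : (∑ i, B (f j) (ab.2 i • f i)) = 0 := by
        apply Finset.sum_eq_zero; intro i _; rw [map_smul, hff, smul_zero]
      rw [h1, h2, add_zero]
    have hψinj : Function.Injective ψ := by
      rw [injective_iff_map_eq_zero]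
      intro ab hab
      have ha : ∀ j, ab.1 j = 0 := by
        intro j
        have := hBfψ j ab
        rw [hab, map_zero] at this
        simpa using this.symm
      have hb : ∀ j, ab.2 j = 0 := by
        intro j
        have := hBeψ j ab
        rw [hab, map_zero] at this
        exact this.symm
      ext j
      · exact ha j
      · exact hb j
    have hrange : Module.finrank ℂ (LinearMap.range ψ) = 2 * k := by
      rw [LinearMap.finrank_range_of_inj hψinj, Module.finrank_prod, Module.finrank_pi,
        Fintype.card_fin]
      omega
    have hdisj : U ⊓ LinearMap.range ψ = ⊥ := by
      rw [eq_bot_iff]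
      intro x hx
      obtain ⟨hxU, ab, hab⟩ := hx
      have hUx := (hUchar x).1 hxU
      have ha : ∀ j, ab.1 j = 0 := by
        intro j
        have := hBfψ j ab
        rw [hab, (hUx.2 j)] at this
        simpa using this.symm
      have hb : ∀ j, ab.2 j = 0 := by
        intro j
        have := hBeψ j ab
        rw [hab, (hUx.1 j)] at this
        exact this.symm
      have : ab = 0 := by
        ext j
        · exact ha j
        · exact hb j
      rw [Submodule.mem_bot, ← hab, this, map_zero]
    have hsuprank : Module.finrank ℂ (U ⊔ LinearMap.range ψ : Submodule ℂ W)
        = Module.finrank ℂ U + 2 * k := by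
      have := Submodule.finrank_sup_add_finrank_inf_eq U (LinearMap.range ψ)
      rw [hdisj, hrange] at this
      simpa using this
    have hsup : U ⊔ LinearMap.range ψ = ⊤ := by
      apply Submodule.eq_top_of_finrank_eq
      have h1 : Module.finrank ℂ (U ⊔ LinearMap.range ψ : Submodule ℂ W)
          ≤ Module.finrank ℂ W := Submodule.finrank_le _
      omega
    have hUrank : Module.finrank ℂ U + 2 * k = Module.finrank ℂ W := by
      rw [← hsuprank, hsup]
      exact finrank_top ℂ W
    -- there exist u w in U with B u w ≠ 0
    have hexists : ∃ u ∈ U, ∃ w ∈ U, B u w ≠ 0 := by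
      by_contra hflat
      push_neg at hflat
      have hUK : U ≤ LinearMap.ker B := by
        intro u hu
        rw [LinearMap.mem_ker]
        ext w
        have hw : w ∈ U ⊔ LinearMap.range ψ := by rw [hsup]; trivial
        obtain ⟨y, hy, s, hs, rfl⟩ := Submodule.mem_sup.1 hw
        obtain ⟨ab, rfl⟩ := hs
        rw [map_add]
        have h1 : B u y = 0 := hflat u hu y hy
        have h2 : B u (ψ ab) = 0 := by
          rw [hψapp, map_add, map_sum, map_sum]
          have hUu := (hUchar u).1 hu
          have e1 : (∑ i, B u (ab.1 i • e i)) = 0 := by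
            apply Finset.sum_eq_zero; intro i _
            rw [map_smul, skew_of_alt B halt (e i) u, hUu.1 i, neg_zero, smul_zero]
          have e2 : (∑ i, B u (ab.2 i • f i)) = 0 := by
            apply Finset.sum_eq_zero; intro i _
            rw [map_smul, skew_of_alt B halt (f i) u, hUu.2 i, neg_zero, smul_zero]
          rw [e1, e2, add_zero]
        simp [h1, h2]
      have := Submodule.finrank_mono hUK
      omega
    obtain ⟨u, hu, w, hw, hBuw⟩ := hexists
    have hUu := (hUchar u).1 hu
    have hUw := (hUchar w).1 hw
    set c := B u w with hcdef
    refine ⟨Fin.snoc e u, Fin.snoc f (c⁻¹ • w), ?_, ?_, ?_⟩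
    · intro a b
      refine Fin.lastCases ?_ ?_ a <;> [skip; intro a'] <;> refine Fin.lastCases ?_ ?_ b <;>
        try intro b'
      · rw [Fin.snoc_last, halt]
      · rw [Fin.snoc_last, Fin.snoc_castSucc, skew_of_alt B halt, hUu.1 b', neg_zero]
      · rw [Fin.snoc_last, Fin.snoc_castSucc, hUu.1 a']
      · rw [Fin.snoc_castSucc, Fin.snoc_castSucc, hee]
    · intro a b
      refine Fin.lastCases ?_ ?_ a <;> [skip; intro a'] <;> refine Fin.lastCases ?_ ?_ b <;>
        try intro b'
      · rw [Fin.snoc_last, halt]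
      · rw [Fin.snoc_last, Fin.snoc_castSucc, map_smul, LinearMap.smul_apply,
          skew_of_alt B halt (f b') w, hUw.2 b', neg_zero, smul_zero]
      · rw [Fin.snoc_last, Fin.snoc_castSucc, map_smul, hUw.2 a', smul_zero]
      · rw [Fin.snoc_castSucc, Fin.snoc_castSucc, hff]
    · intro a b
      refine Fin.lastCases ?_ ?_ a <;> [skip; intro a'] <;> refine Fin.lastCases ?_ ?_ b <;>
        try intro b'
      · rw [Fin.snoc_last, Fin.snoc_last, if_pos rfl, map_smul, smul_eq_mul, ← hcdef,
          inv_mul_cancel₀ hBuw]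
      · rw [Fin.snoc_last, Fin.snoc_castSucc, skew_of_alt B halt, hUu.2 b', neg_zero,
          if_neg (by simp [Fin.ext_iff]; omega)]
      · rw [Fin.snoc_last, Fin.snoc_castSucc, map_smul, hUw.1 a', smul_zero,
          if_neg (by simp [Fin.ext_iff]; omega)]
      · rw [Fin.snoc_castSucc, Fin.snoc_castSucc, hef]
        by_cases hab : a' = b'
        · rw [if_pos hab, if_pos (by rw [hab])]
        · rw [if_neg hab, if_neg (by simp [Fin.ext_iff] at hab ⊢; omega)]

end Symp
end S7
open S7

set_option maxHeartbeats 1000000 in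
/-- the linear algebra of C-symplectic forms.  If `V` is a real vector space
of dimension `4n` and `Ω` is an alternating `ℂ`-bilinear form on `V ⊗_ℝ ℂ` with
`Ω^{n+1} = 0` and `Ωⁿ∧Ω̄ⁿ ≠ 0`, then the kernel `K = {v : v ⌟ Ω = 0}` has complex
dimension `2n`, meets its complex conjugate `K̄` trivially, and `V ⊗_ℝ ℂ = K ⊕ K̄`. -/
theorem statement7 {V : Type*} [AddCommGroup V] [Module ℝ V] [FiniteDimensional ℝ V]
    (n : ℕ) (hdim : Module.finrank ℝ V = 4 * n)
    (Ω : (ℂ ⊗[ℝ] V) →ₗ[ℂ] (ℂ ⊗[ℝ] V) →ₗ[ℂ] ℂ)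
    (hΩalt : ∀ v, Ω v v = 0)
    -- `σconj` is the complex conjugation of `V ⊗_ℝ ℂ`, induced by `v ⊗ z ↦ v ⊗ z̄`
    (σconj : (ℂ ⊗[ℝ] V) →ₗ[ℝ] (ℂ ⊗[ℝ] V))
    (hσ : ∀ (z : ℂ) (v : V), σconj (z ⊗ₜ[ℝ] v) = (starRingEnd ℂ z) ⊗ₜ[ℝ] v)
    -- `Ω^{n+1} = 0` as an alternating `(2n+2)`-form
    (hpow : ∀ x : Fin ((n + 1) + (n + 1)) → ℂ ⊗[ℝ] V,
      Stmt.wedgeMany (n + 1) (fun _ => fun v => Ω (v 0) (v 1)) x = 0)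
    -- `Ωⁿ ∧ Ω̄ⁿ ≠ 0` as a `4n`-form
    (hnz : ∃ x : Fin ((n + n) + (n + n)) → ℂ ⊗[ℝ] V,
      Stmt.wedgeMany (n + n)
        (fun i => if (i : ℕ) < n then (fun v => Ω (v 0) (v 1))
          else (fun v => starRingEnd ℂ (Ω (σconj (v 0)) (σconj (v 1))))) x ≠ 0) :
    Module.finrank ℂ (LinearMap.ker Ω) = 2 * n ∧
    (∀ v : ℂ ⊗[ℝ] V, Ω v = 0 → Ω (σconj v) = 0 → v = 0) ∧
    (∀ v : ℂ ⊗[ℝ] V, ∃ a b : ℂ ⊗[ℝ] V, Ω a = 0 ∧ Ω (σconj b) = 0 ∧ v = a + b) := by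
  classical
  have hfinW : Module.finrank ℂ (ℂ ⊗[ℝ] V) = 4 * n := by
    rw [Module.finrank_baseChange, hdim]
  -- conjugation facts
  have hσs : ∀ (z : ℂ) (w : ℂ ⊗[ℝ] V), σconj (z • w) = (starRingEnd ℂ z) • σconj w := by
    intro z w
    induction w using TensorProduct.induction_on with
    | zero => simp
    | tmul c v =>
      rw [TensorProduct.smul_tmul', smul_eq_mul, hσ, hσ, map_mul, TensorProduct.smul_tmul',
        smul_eq_mul]
    | add u v hu hv => rw [smul_add, map_add, hu, hv, map_add, smul_add]
  have hσσ : ∀ w : ℂ ⊗[ℝ] V, σconj (σconj w) = w := by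
    intro w
    induction w using TensorProduct.induction_on with
    | zero => simp
    | tmul c v => rw [hσ, hσ]; simp
    | add u v hu hv => rw [map_add, map_add, hu, hv]
  -- the 2n-family of forms for Ωⁿ ∧ Ω̄ⁿ
  set ω2 : Fin (n + n) → (ℂ ⊗[ℝ] V) → (ℂ ⊗[ℝ] V) → ℂ :=
    fun i u w => if (i : ℕ) < n then Ω u w
      else starRingEnd ℂ (Ω (σconj u) (σconj w)) with hω2def
  have hadd1 : ∀ (i : Fin (n + n)) (u u' w : ℂ ⊗[ℝ] V),
      ω2 i (u + u') w = ω2 i u w + ω2 i u' w := by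
    intro i u u' w
    rw [hω2def]
    by_cases h : (i : ℕ) < n
    · simp only [if_pos h]
      rw [map_add, LinearMap.add_apply]
    · simp only [if_neg h]
      rw [map_add, map_add, LinearMap.add_apply, map_add]
  have hadd2 : ∀ (i : Fin (n + n)) (u w w' : ℂ ⊗[ℝ] V),
      ω2 i u (w + w') = ω2 i u w + ω2 i u w' := by
    intro i u w w'
    rw [hω2def]
    by_cases h : (i : ℕ) < n
    · simp only [if_pos h]
      rw [map_add]
    · simp only [if_neg h]
      rw [map_add, map_add, map_add]
  have hsm1 : ∀ (i : Fin (n + n)) (t : ℂ) (u w : ℂ ⊗[ℝ] V),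
      ω2 i (t • u) w = t * ω2 i u w := by
    intro i t u w
    rw [hω2def]
    by_cases h : (i : ℕ) < n
    · simp only [if_pos h]
      rw [map_smul, LinearMap.smul_apply, smul_eq_mul]
    · simp only [if_neg h]
      rw [hσs, map_smul, LinearMap.smul_apply, smul_eq_mul, map_mul]
      simp
  have hsm2 : ∀ (i : Fin (n + n)) (t : ℂ) (u w : ℂ ⊗[ℝ] V),
      ω2 i u (t • w) = t * ω2 i u w := by
    intro i t u w
    rw [hω2def]
    by_cases h : (i : ℕ) < n
    · simp only [if_pos h]
      rw [map_smul, smul_eq_mul]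
    · simp only [if_neg h]
      rw [hσs, map_smul, smul_eq_mul, map_mul]
      simp
  have hskew2 : ∀ (i : Fin (n + n)) (u w : ℂ ⊗[ℝ] V), ω2 i w u = - ω2 i u w := by
    intro i u w
    rw [hω2def]
    by_cases h : (i : ℕ) < n
    · simp only [if_pos h]
      exact skew_of_alt Ω hΩalt u w
    · simp only [if_neg h]
      rw [skew_of_alt Ω hΩalt (σconj u) (σconj w), map_neg]
  -- vanishing lemma: nothing lies in (LinearMap.ker Ω) ⊓ (LinearMap.ker Ω)̄
  have hvanish : ∀ v : ℂ ⊗[ℝ] V, Ω v = 0 → Ω (σconj v) = 0 → v = 0 := by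
    intro v hv1 hv2
    obtain ⟨x, hx⟩ := hnz
    have hfun : (fun (i : Fin (n + n)) (v : Fin 2 → ℂ ⊗[ℝ] V) => ω2 i (v 0) (v 1)) =
        (fun (i : Fin (n + n)) => if (i : ℕ) < n then (fun v : Fin 2 → ℂ ⊗[ℝ] V => Ω (v 0) (v 1))
          else (fun v => starRingEnd ℂ (Ω (σconj (v 0)) (σconj (v 1))))) := by
      funext i v
      rw [hω2def]
      by_cases h : (i : ℕ) < n
      · simp only [if_pos h]
      · simp only [if_neg h]
    have hx' : Stmt.wedgeMany (n + n)
        (fun i (v : Fin 2 → ℂ ⊗[ℝ] V) => ω2 i (v 0) (v 1)) x ≠ 0 := by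
      rw [hfun]; exact hx
    apply key_vanish (n + n) ω2 hadd1 hadd2 hsm1 hsm2 hskew2
      (by rw [hfinW]; omega) x hx' v
    intro i u
    constructor
    · rw [hω2def]
      by_cases h : (i : ℕ) < n
      · simp only [if_pos h]
        rw [hv1, LinearMap.zero_apply]
      · simp only [if_neg h]
        rw [hv2, LinearMap.zero_apply, map_zero]
    · rw [hω2def]
      by_cases h : (i : ℕ) < n
      · simp only [if_pos h]
        rw [skew_of_alt Ω hΩalt v u, hv1, LinearMap.zero_apply, neg_zero]
      · simp only [if_neg h]
        rw [skew_of_alt Ω hΩalt (σconj v) (σconj u), hv2, LinearMap.zero_apply,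
          neg_zero, map_zero]
  -- the two kernels
  set K' : Submodule ℂ (ℂ ⊗[ℝ] V) :=
    { carrier := {w | Ω (σconj w) = 0}
      add_mem' := by
        intro a b ha hb
        show Ω (σconj (a + b)) = 0
        rw [map_add, map_add, ha, hb, add_zero]
      zero_mem' := by
        show Ω (σconj 0) = 0
        rw [map_zero, map_zero]
      smul_mem' := by
        intro z w hw
        show Ω (σconj (z • w)) = 0
        rw [hσs, map_smul, hw, smul_zero] } with hK'def
  have hK'mem : ∀ w, w ∈ K' ↔ Ω (σconj w) = 0 := fun w => Iff.rfl
  have hKmem : ∀ w, w ∈ (LinearMap.ker Ω) ↔ Ω w = 0 := fun w => LinearMap.mem_ker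
  -- (LinearMap.ker Ω) ⊓ K' = ⊥
  have hdisj : (LinearMap.ker Ω) ⊓ K' = ⊥ := by
    rw [eq_bot_iff]
    intro v hv
    rw [Submodule.mem_bot]
    exact hvanish v ((hKmem v).1 hv.1) ((hK'mem v).1 hv.2)
  -- finrank K' = finrank (LinearMap.ker Ω)
  have hσK : ∀ w, w ∈ (LinearMap.ker Ω) → σconj w ∈ K' := by
    intro w hw
    rw [hK'mem, hσσ]
    exact (hKmem w).1 hw
  have hσK' : ∀ w, w ∈ K' → σconj w ∈ (LinearMap.ker Ω) := by
    intro w hw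
    rw [hKmem]
    exact (hK'mem w).1 hw
  have hrankKK' : Module.finrank ℂ K' = Module.finrank ℂ (LinearMap.ker Ω) := by
    have E : (LinearMap.ker Ω) ≃ₗ[ℝ] K' :=
      { toFun := fun w => ⟨σconj w.1, hσK w.1 w.2⟩
        invFun := fun w => ⟨σconj w.1, hσK' w.1 w.2⟩
        left_inv := fun w => Subtype.ext (hσσ w.1)
        right_inv := fun w => Subtype.ext (hσσ w.1)
        map_add' := by intro a b; ext; exact map_add σconj a.1 b.1
        map_smul' := by intro r a; ext; exact map_smul σconj r a.1 }
    have h1 : Module.finrank ℝ (LinearMap.ker Ω) = Module.finrank ℝ K' := E.finrank_eq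
    have h2 : Module.finrank ℝ (LinearMap.ker Ω) = 2 * Module.finrank ℂ (LinearMap.ker Ω) := by
      rw [← Module.finrank_mul_finrank ℝ ℂ (LinearMap.ker Ω), Complex.finrank_real_complex]
    have h3 : Module.finrank ℝ K' = 2 * Module.finrank ℂ K' := by
      rw [← Module.finrank_mul_finrank ℝ ℂ K', Complex.finrank_real_complex]
    omega
  -- upper bound
  have hsup_le := Submodule.finrank_le ((LinearMap.ker Ω) ⊔ K')
  have hsum := Submodule.finrank_sup_add_finrank_inf_eq (LinearMap.ker Ω) K'
  rw [hdisj] at hsum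
  simp only [finrank_bot, add_zero] at hsum
  have hupper : Module.finrank ℂ (LinearMap.ker Ω) ≤ 2 * n := by omega
  -- lower bound
  have hlower : 2 * n ≤ Module.finrank ℂ (LinearMap.ker Ω) := by
    by_contra hlt
    push_neg at hlt
    obtain ⟨e, f, hee, hff, hef⟩ := symplectic_family Ω hΩalt (n + 1)
      (by rw [hfinW]; omega)
    have hfe : ∀ a b, Ω (f a) (e b) = if a = b then -1 else 0 := by
      intro a b
      rw [skew_of_alt Ω hΩalt (e b) (f a), hef]
      by_cases hab : a = b
      · subst hab; simp
      · rw [if_neg (Ne.symm hab), if_neg hab]; norm_num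
    have hws := wedge_symplectic (n + 1) (fun _ u w => Ω u w) e f
      (fun _ a b => hee a b) (fun _ a b => hff a b) (fun _ a b => hef a b)
      (fun _ a b => hfe a b)
    have hzero : ((n + 1).factorial : ℂ) = 0 := by
      rw [← hws]
      exact hpow _
    rw [Nat.cast_eq_zero] at hzero
    exact Nat.factorial_ne_zero _ hzero
  have hKrank : Module.finrank ℂ (LinearMap.ker Ω) = 2 * n := le_antisymm hupper hlower
  -- the sum is everything
  have htop : (LinearMap.ker Ω) ⊔ K' = ⊤ := by
    apply Submodule.eq_top_of_finrank_eq
    rw [hfinW]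
    omega
  refine ⟨hKrank, hvanish, ?_⟩
  intro v
  have hv : v ∈ (LinearMap.ker Ω) ⊔ K' := by rw [htop]; trivial
  obtain ⟨a, ha, b, hb, rfl⟩ := Submodule.mem_sup.1 hv
  exact ⟨a, b, (hKmem a).1 ha, (hK'mem b).1 hb, rfl⟩
end
end
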